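/- arXiv:2512.18058 — 7 statements merged into one kernel-verified Lean document; each statement's English description precedes it below -/
import Mathlib

section
/- Let X be a real Banach lattice, let E ⊆ X be a (real) linear subspace, let f ∈ E, and let C > 0. Then the following are equivalent: (1) for every g ∈ E one has min(‖f − g‖, ‖f + g‖) ≤ C · ‖ |f| − |g| ‖ (i.e., C-local stable phase retrieval holds at f in E); (2) there do not exist g, h ∈ E with f = g + h and ‖ |g| ⊓ |h| ‖ < C⁻¹ · min(‖g‖, ‖h‖). -/
section Aux
variable {α : Type*} [Lattice α] [AddCommGroup α] [CovariantClass α α (· + ·) (· ≤ ·)]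

lemma my_two_sup (a b : α) : (a ⊔ b) + (a ⊔ b) = (a + a) ⊔ (b + b) := by
  have hab : a + b ≤ (a + a) ⊔ (b + b) := by
    rw [← sub_nonneg]
    have : (a + a) ⊔ (b + b) - (a + b) = (a - b) ⊔ (b - a) := by
      rw [sub_eq_add_neg, sup_add]
      congr 1 <;> abel
    rw [this]
    calc (0:α) ≤ |a - b| := abs_nonneg _
    _ = (a - b) ⊔ (b - a) := by rw [abs, neg_sub]
  rw [add_sup, sup_add, sup_add]
  apply le_antisymm
  · refine sup_le (sup_le le_sup_left ?_) (sup_le ?_ le_sup_right)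
    · rw [add_comm b a]; exact hab
    · exact hab
  · exact sup_le (le_sup_left.trans le_sup_left) (le_sup_right.trans le_sup_right)

lemma my_two_inf (a b : α) : (a ⊓ b) + (a ⊓ b) = (a + a) ⊓ (b + b) := by
  have h := my_two_sup (-a) (-b)
  rw [← neg_inf, ← neg_add, ← neg_add a a, ← neg_add b b, ← neg_inf] at h
  exact neg_injective h

lemma my_abs_add_self (a : α) : |a + a| = |a| + |a| := by
  rw [abs, abs, my_two_sup, ← neg_add]

lemma my_inf_double (x y : α) : x ⊓ y + x ⊓ y = x + y - |y - x| := by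
  have h := two_nsmul_inf_eq_add_sub_abs_sub x y
  rwa [two_nsmul] at h

/-- Key inequality: `2(|u| ⊓ |v|) ≤ ||u+v| - |u-v||`. -/
lemma my_key (u v : α) : |u| ⊓ |v| + |u| ⊓ |v| ≤ |(|u + v| - |u - v|)| := by
  letI : DistribLattice α := AddCommGroup.toDistribLattice α
  set s := |u + v| with hs
  set t := |u - v| with ht
  have hst : s - t ≤ |s - t| := le_abs_self _
  have hts : t - s ≤ |s - t| := by rw [← neg_sub s t]; exact neg_le_abs _
  have b1 : u ⊓ v + u ⊓ v ≤ |s - t| := by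
    rw [my_inf_double, abs_sub_comm v u, ← ht]
    exact le_trans (sub_le_sub_right (le_abs_self _) _) hst
  have b2 : -u ⊓ -v + -u ⊓ -v ≤ |s - t| := by
    rw [my_inf_double]
    have h1 : -v - -u = -(v - u) := by abel
    rw [h1, abs_neg, abs_sub_comm v u, ← ht]
    have h2 : -u + -v = -(u + v) := by abel
    rw [h2]
    exact le_trans (sub_le_sub_right (neg_le_abs _) _) hst
  have b3 : u ⊓ -v + u ⊓ -v ≤ |s - t| := by
    rw [my_inf_double]
    have h1 : -v - u = -(u + v) := by abel
    rw [h1, abs_neg, ← hs]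
    have h2 : u + -v = u - v := by abel
    rw [h2]
    exact le_trans (sub_le_sub_right (le_abs_self _) _) hts
  have b4 : -u ⊓ v + -u ⊓ v ≤ |s - t| := by
    rw [my_inf_double]
    have h1 : v - -u = u + v := by abel
    rw [h1, ← hs]
    have h2 : -u + v = -(u - v) := by abel
    rw [h2]
    refine le_trans (sub_le_sub_right ?_ _) hts
    rw [ht]
    exact neg_le_abs _
  have hexp : |u| ⊓ |v| = (u ⊓ v ⊔ u ⊓ -v) ⊔ (-u ⊓ v ⊔ -u ⊓ -v) := by
    rw [abs, abs, inf_sup_right, inf_sup_left, inf_sup_left]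
  rw [hexp, my_two_sup, my_two_sup, my_two_sup]
  exact sup_le (sup_le b1 b3) (sup_le b4 b2)

end Aux

lemma my_min_two_mul (a b : ℝ) : min (2*a) (2*b) = 2 * min a b := by
  rcases le_total a b with h | h
  · rw [min_eq_left h, min_eq_left (by linarith)]
  · rw [min_eq_right h, min_eq_right (by linarith)]

/-- **Theorem (characterization of local stable phase retrieval in real Banach lattices).**
Let `X` be a real Banach lattice, `E ⊆ X` a linear subspace, `f ∈ E` and `C > 0`.
Then `C`-local stable phase retrieval holds at `f` in `E`
(i.e. `min(‖f − g‖, ‖f + g‖) ≤ C‖|f| − |g|‖` for all `g ∈ E`) if and only if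
there are no `g, h ∈ E` with `f = g + h` and `‖|g| ⊓ |h|‖ < C⁻¹ min(‖g‖, ‖h‖)`. -/
theorem local_stable_phase_retrieval_iff_no_almost_disjoint_decomposition
    {X : Type*} [NormedAddCommGroup X] [Lattice X] [HasSolidNorm X] [IsOrderedAddMonoid X] [NormedSpace ℝ X] [CompleteSpace X]
    (E : Submodule ℝ X) (f : X) (hf : f ∈ E) (C : ℝ) (hC : 0 < C) :
    (∀ g ∈ E, min ‖f - g‖ ‖f + g‖ ≤ C * ‖|f| - |g|‖) ↔
      ¬ ∃ g ∈ E, ∃ h ∈ E, f = g + h ∧ ‖|g| ⊓ |h|‖ < C⁻¹ * min ‖g‖ ‖h‖ := by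
  constructor
  · rintro hlspr ⟨g, hg, h, hh, hfgh, hlt⟩
    set m := |g| ⊓ |h| with hm
    have hm0 : (0:X) ≤ m := le_inf (abs_nonneg g) (abs_nonneg h)
    set M := min ‖g‖ ‖h‖ with hM
    have hM0 : 0 < M := by
      by_contra h0
      push_neg at h0
      have h1 : C⁻¹ * M ≤ 0 := mul_nonpos_of_nonneg_of_nonpos (inv_pos.2 hC).le h0
      have h2 := norm_nonneg m
      linarith
    have h1 := hlspr (g - h) (E.sub_mem hg hh)
    have e1 : f - (g - h) = h + h := by rw [hfgh]; abel
    have e2 : f + (g - h) = g + g := by rw [hfgh]; abel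
    have n1 : ‖h + h‖ = 2 * ‖h‖ := by rw [← two_smul ℝ h, norm_smul]; norm_num
    have n2 : ‖g + g‖ = 2 * ‖g‖ := by rw [← two_smul ℝ g, norm_smul]; norm_num
    have habs : |(|f| - |g - h|)| ≤ m + m := by
      have A := abs_abs_sub_abs_le f (g - h)
      have B := abs_abs_sub_abs_le f (h - g)
      rw [abs_sub_comm h g] at B
      rw [e1, my_abs_add_self] at A
      have e2' : f - (g - h) = h + h := e1
      have e3 : f - (h - g) = g + g := by rw [hfgh]; abel
      rw [e3, my_abs_add_self] at B
      rw [hm, my_two_inf]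
      exact le_inf B A
    have hnorm : ‖|f| - |g - h|‖ ≤ 2 * ‖m‖ := by
      have hsolid : ‖|f| - |g - h|‖ ≤ ‖m + m‖ := by
        apply HasSolidNorm.solid
        rwa [abs_of_nonneg (add_nonneg hm0 hm0)]
      rwa [← two_smul ℝ m, norm_smul, Real.norm_ofNat] at hsolid
    rw [e1, e2, n1, n2, my_min_two_mul, min_comm, ← hM] at h1
    have hc1 : C * ‖|f| - |g - h|‖ ≤ C * (2 * ‖m‖) :=
      mul_le_mul_of_nonneg_left hnorm hC.le
    have hc2 : C * (2 * ‖m‖) < C * (2 * (C⁻¹ * M)) := by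
      apply mul_lt_mul_of_pos_left _ hC
      linarith
    have hc3 : C * (2 * (C⁻¹ * M)) = 2 * M := by
      field_simp
    linarith
  · intro hno g hg
    push_neg at hno
    set u := (2:ℝ)⁻¹ • (f + g) with hu
    set v := (2:ℝ)⁻¹ • (f - g) with hv
    have huE : u ∈ E := E.smul_mem _ (E.add_mem hf hg)
    have hvE : v ∈ E := E.smul_mem _ (E.sub_mem hf hg)
    have huv : u + v = f := by
      rw [hu, hv, ← smul_add]
      have : (f + g) + (f - g) = (2:ℝ) • f := by rw [two_smul]; abel
      rw [this, smul_smul]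
      norm_num
    have hg' : u - v = g := by
      rw [hu, hv, ← smul_sub]
      have : (f + g) - (f - g) = (2:ℝ) • g := by rw [two_smul]; abel
      rw [this, smul_smul]
      norm_num
    have hkey := hno u huE v hvE huv.symm
    set m := |u| ⊓ |v| with hm
    have hm0 : (0:X) ≤ m := le_inf (abs_nonneg u) (abs_nonneg v)
    have hfg1 : f - g = v + v := by rw [← huv, ← hg']; abel
    have hfg2 : f + g = u + u := by rw [← huv, ← hg']; abel
    have n1 : ‖v + v‖ = 2 * ‖v‖ := by rw [← two_smul ℝ v, norm_smul]; norm_num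
    have n2 : ‖u + u‖ = 2 * ‖u‖ := by rw [← two_smul ℝ u, norm_smul]; norm_num
    have habs : m + m ≤ |(|f| - |g|)| := by
      rw [← huv, ← hg']
      exact my_key u v
    have hnorm : 2 * ‖m‖ ≤ ‖|f| - |g|‖ := by
      have hsolid : ‖m + m‖ ≤ ‖|f| - |g|‖ := by
        apply HasSolidNorm.solid
        rwa [abs_of_nonneg (add_nonneg hm0 hm0)]
      rwa [← two_smul ℝ m, norm_smul, Real.norm_ofNat] at hsolid
    rw [hfg1, hfg2, n1, n2, my_min_two_mul, min_comm]
    have hk2 : min ‖u‖ ‖v‖ ≤ C * ‖m‖ := by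
      have := mul_le_mul_of_nonneg_left hkey hC.le
      rw [← mul_assoc, mul_inv_cancel₀ hC.ne', one_mul] at this
      linarith
    have : C * (2 * ‖m‖) ≤ C * ‖|f| - |g|‖ := mul_le_mul_of_nonneg_left hnorm hC.le
    linarith
end

section
/- Let d ≥ 1, σ ≥ 0, p ∈ [1, ∞), q ∈ [1, ∞]. Let h : ℝ^d → ℂ be measurable with ‖⟨·⟩^{2σ} h‖_{L^p(ℝ^d)} < ∞ and ‖h‖_{L^q(B(0,1))} ≥ 1 and ‖h‖_{L^p(B(0,1))} ≥ 1. Let (j_n)_{n ≥ 1} be integers with j_1 ≥ 2, j_{n+1} ≥ 3 j_n for all n, and suppose ‖⟨·⟩^{2σ} h‖_{L^p(\{|x| ≥ j_n/2\})} ≤ 2^{−3n} for all n. Set A_n := {x ∈ ℝ^d : j_n ≤ |x| ≤ 2 j_n} and ε_n(x) := 2^{−n} ⟨j_n⟩^{−σ} h(x − (3/2) j_n e₁), where e₁ is the first standard basis vector and ⟨j⟩ := (1 + j²)^{1/2}. Then for all n ≥ 1: (1) ‖⟨·⟩^σ ε_n‖_{L^p(ℝ^d)} ≤ 5^σ ·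 2^{−n} · ‖⟨·⟩^σ h‖_{L^p(ℝ^d)} and ‖ε_n‖_{L^q(ℝ^d)} = 2^{−n} ⟨j_n⟩^{−σ} ‖h‖_{L^q(ℝ^d)}; (2) ‖ε_n‖_{L^q(A_n)} ≥ 2^{−n} ⟨j_n⟩^{−σ}; (3) ‖⟨·⟩^σ ε_n‖_{L^p(ℝ^d ∖ A_n)} ≤ 5^σ · 2^{−4n} ⟨j_n⟩^{−σ}; (4) for every 1 ≤ ℓ < n, ‖⟨·⟩^σ ε_ℓ‖_{L^p(A_n)} ≤ 5^σ · 2^{−3n} ⟨j_n⟩^{−σ}. -/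
open MeasureTheory ENNReal

lemma trans_lemma {d : ℕ} (G : EuclideanSpace ℝ (Fin d) → ℂ)
    (hG : AEStronglyMeasurable G (volume : Measure (EuclideanSpace ℝ (Fin d))))
    (v : EuclideanSpace ℝ (Fin d)) (p : ℝ≥0∞)
    (T : Set (EuclideanSpace ℝ (Fin d))) (hT : MeasurableSet T) :
    eLpNorm (fun x => G (x - v)) p (volume.restrict ((fun x => x - v) ⁻¹' T)) =
      eLpNorm G p (volume.restrict T) := by
  have hmp : MeasurePreserving (fun x => x - v)
      (volume : Measure (EuclideanSpace ℝ (Fin d))) volume :=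
    measurePreserving_sub_right volume v
  exact eLpNorm_comp_measurePreserving (hG.restrict) (hmp.restrict_preimage hT)

lemma aux_rpow25 (σ : ℝ) : ((25:ℝ)) ^ (σ/2) = 5 ^ σ := by
  rw [show (25:ℝ) = 5 ^ (2:ℝ) by
    rw [show (2:ℝ) = ((2:ℕ):ℝ) by norm_num, Real.rpow_natCast]; norm_num,
    ← Real.rpow_mul (by norm_num)]
  congr 1
  ring

lemma aux_sq_rpow (σ B : ℝ) (hB : 0 ≤ B) : (B^2) ^ (σ/2) = B ^ (2*σ/2) := by
  rw [← Real.rpow_natCast B 2, ← Real.rpow_mul hB]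
  congr 1
  push_cast
  ring

lemma aux_pgen (σ : ℝ) (hσ : 0 ≤ σ) (a c e b : ℝ) (ha : 0 ≤ a) (hc : 0 < c)
    (he : 0 < e) (hb : 0 ≤ b) (hbase : a * e ≤ 25 * c * b) :
    a ^ (σ/2) * c ^ (-σ/2) ≤ 5 ^ σ * e ^ (-σ/2) * b ^ (σ/2) := by
  have key : (a*e) ^ (σ/2) ≤ (25*c*b) ^ (σ/2) :=
    Real.rpow_le_rpow (by positivity) hbase (by positivity)
  rw [Real.mul_rpow ha he.le, Real.mul_rpow (by positivity) hb,
    Real.mul_rpow (by norm_num) hc.le, aux_rpow25] at key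
  have hcp : 0 < c ^ (σ/2) := Real.rpow_pos_of_pos hc _
  have hep : 0 < e ^ (σ/2) := Real.rpow_pos_of_pos he _
  have hcn : c ^ (-σ/2) = (c ^ (σ/2))⁻¹ := by rw [neg_div, Real.rpow_neg hc.le]
  have hen : e ^ (-σ/2) = (e ^ (σ/2))⁻¹ := by rw [neg_div, Real.rpow_neg he.le]
  have goal' : a ^ (σ/2) / c ^ (σ/2) ≤ (5 ^ σ * b ^ (σ/2)) / e ^ (σ/2) := by
    rw [div_le_div_iff₀ hcp hep]
    nlinarith [key]
  calc a ^ (σ/2) * c ^ (-σ/2) = a ^ (σ/2) / c ^ (σ/2) := by rw [hcn, ← div_eq_mul_inv]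
    _ ≤ (5 ^ σ * b ^ (σ/2)) / e ^ (σ/2) := goal'
    _ = 5 ^ σ * e ^ (-σ/2) * b ^ (σ/2) := by rw [hen]; ring

lemma aux_pt1 (σ : ℝ) (hσ : 0 ≤ σ) (X Y J t H : ℝ) (hX : 0 ≤ X) (hY : 0 ≤ Y)
    (hJ : 0 ≤ J) (ht : 0 < t) (hH : 0 ≤ H) (hXY : X ≤ Y + 3/2 * J) :
    (1+X^2)^(σ/2) * ((t * (1+J^2)^(-σ/2)) * H) ≤ (5^σ * t) * ((1+Y^2)^(σ/2) * H) := by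
  have hb : (1+X^2) * 1 ≤ 25 * (1+J^2) * (1+Y^2) := by nlinarith [sq_nonneg (Y - J), sq_nonneg (Y + J), sq_nonneg (Y*J)]
  have h1 : (1+X^2)^(σ/2) * (1+J^2)^(-σ/2) ≤ 5^σ * (1+Y^2)^(σ/2) := by
    have := aux_pgen σ hσ (1+X^2) (1+J^2) 1 (1+Y^2) (by positivity) (by positivity)
      one_pos (by positivity) hb
    simpa [Real.one_rpow] using this
  calc (1+X^2)^(σ/2) * ((t * (1+J^2)^(-σ/2)) * H)
      = ((1+X^2)^(σ/2) * (1+J^2)^(-σ/2)) * (t * H) := by ring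
    _ ≤ (5^σ * (1+Y^2)^(σ/2)) * (t * H) :=
        mul_le_mul_of_nonneg_right h1 (by positivity)
    _ = (5^σ * t) * ((1+Y^2)^(σ/2) * H) := by ring

lemma aux_pt34 (σ : ℝ) (hσ : 0 ≤ σ) (X Y Jm Jn t H : ℝ) (hX : 0 ≤ X) (hY : 0 ≤ Y)
    (hJm : 0 ≤ Jm) (hJn : 0 ≤ Jn) (ht : 0 < t) (hH : 0 ≤ H)
    (hXY : X ≤ Y + 3/2 * Jm) (hYJ : Jn/2 ≤ Y) :
    (1+X^2)^(σ/2) * ((t * (1+Jm^2)^(-σ/2)) * H) ≤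
      (5^σ * t * (1+Jn^2)^(-σ/2)) * ((1+Y^2)^(2*σ/2) * H) := by
  have hx2 : X^2 ≤ (Y + 3/2*Jm)^2 := by nlinarith
  have hj2 : Jn^2 ≤ 4*Y^2 := by nlinarith
  have hb : (1+X^2) * (1+Jn^2) ≤ 25 * (1+Jm^2) * ((1+Y^2)^2) := by
    nlinarith [hx2, hj2, sq_nonneg (Y - Jm), sq_nonneg (Y*Jm), sq_nonneg Y, sq_nonneg Jm,
      mul_nonneg hY hJm, sq_nonneg (Y^2 - Y*Jm), mul_nonneg (mul_nonneg hY hY) (mul_nonneg hY hJm)]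
  have h1 : (1+X^2)^(σ/2) * (1+Jm^2)^(-σ/2) ≤
      5^σ * (1+Jn^2)^(-σ/2) * (1+Y^2)^(2*σ/2) := by
    have := aux_pgen σ hσ (1+X^2) (1+Jm^2) (1+Jn^2) ((1+Y^2)^2) (by positivity)
      (by positivity) (by positivity) (by positivity) hb
    rwa [aux_sq_rpow σ (1+Y^2) (by positivity)] at this
  calc (1+X^2)^(σ/2) * ((t * (1+Jm^2)^(-σ/2)) * H)
      = ((1+X^2)^(σ/2) * (1+Jm^2)^(-σ/2)) * (t * H) := by ring
    _ ≤ (5^σ * (1+Jn^2)^(-σ/2) * (1+Y^2)^(2*σ/2)) * (t * H) :=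
        mul_le_mul_of_nonneg_right h1 (by positivity)
    _ = (5^σ * t * (1+Jn^2)^(-σ/2)) * ((1+Y^2)^(2*σ/2) * H) := by ring


set_option maxHeartbeats 1000000 in
/-- **Bump estimates (Lemma on the sequence `ε_n`).**
Given `h` with unit mass on the unit ball, weighted decay, and a rapidly growing
sequence of radii `j_n`, the translated bumps
`ε_n(x) = 2^{-n} ⟨j_n⟩^{-σ} h(x − (3/2) j_n e₁)` satisfy global upper bounds,
a mass concentration bound on the annulus `A_n = {j_n ≤ |x| ≤ 2 j_n}`, a tail
bound outside `A_n`, and a small-overlap bound. -/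
theorem bump_sequence_estimates
    (d : ℕ) (hd : 0 < d) (σ : ℝ) (hσ : 0 ≤ σ) (p q : ℝ≥0∞)
    (hp : 1 ≤ p) (hp' : p ≠ ∞) (hq : 1 ≤ q)
    (h : EuclideanSpace ℝ (Fin d) → ℂ) (hmeas : Measurable h)
    (hdecay : eLpNorm (fun x => ((1 + ‖x‖ ^ 2) ^ ((2 * σ) / 2) : ℝ) • h x) p volume ≠ ∞)
    (hmassq : 1 ≤ eLpNorm h q (volume.restrict (Metric.ball (0 : EuclideanSpace ℝ (Fin d)) 1)))
    (hmassp : 1 ≤ eLpNorm h p (volume.restrict (Metric.ball (0 : EuclideanSpace ℝ (Fin d)) 1)))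
    (j : ℕ → ℕ) (hj1 : 2 ≤ j 1) (hjgrow : ∀ n, 1 ≤ n → 3 * j n ≤ j (n + 1))
    (hjtail : ∀ n, 1 ≤ n →
      eLpNorm (fun x => ((1 + ‖x‖ ^ 2) ^ ((2 * σ) / 2) : ℝ) • h x) p
          (volume.restrict {x : EuclideanSpace ℝ (Fin d) | (j n : ℝ) / 2 ≤ ‖x‖}) ≤
        ENNReal.ofReal ((2 : ℝ) ^ (-(3 * (n : ℝ)))))
    (A : ℕ → Set (EuclideanSpace ℝ (Fin d)))
    (hA : ∀ n, A n = {x : EuclideanSpace ℝ (Fin d) | (j n : ℝ) ≤ ‖x‖ ∧ ‖x‖ ≤ 2 * (j n : ℝ)})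
    (ε : ℕ → EuclideanSpace ℝ (Fin d) → ℂ)
    (hε : ∀ n x, ε n x =
      (((2 : ℝ) ^ (-(n : ℝ)) * (1 + (j n : ℝ) ^ 2) ^ (-σ / 2) : ℝ) : ℂ) *
        h (x - (3 / 2 * (j n : ℝ)) • EuclideanSpace.single (⟨0, hd⟩ : Fin d) (1 : ℝ))) :
    ∀ n, 1 ≤ n →
      -- (1) global upper bounds
      (eLpNorm (fun x => ((1 + ‖x‖ ^ 2) ^ (σ / 2) : ℝ) • ε n x) p volume ≤
          ENNReal.ofReal ((5 : ℝ) ^ σ * (2 : ℝ) ^ (-(n : ℝ))) *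
            eLpNorm (fun x => ((1 + ‖x‖ ^ 2) ^ (σ / 2) : ℝ) • h x) p volume) ∧
      (eLpNorm (ε n) q volume =
          ENNReal.ofReal ((2 : ℝ) ^ (-(n : ℝ)) * (1 + (j n : ℝ) ^ 2) ^ (-σ / 2)) *
            eLpNorm h q volume) ∧
      -- (2) mass concentration on `A n`
      (ENNReal.ofReal ((2 : ℝ) ^ (-(n : ℝ)) * (1 + (j n : ℝ) ^ 2) ^ (-σ / 2)) ≤
          eLpNorm (ε n) q (volume.restrict (A n))) ∧
      -- (3) tail bound outside of `A n`
      (eLpNorm (fun x => ((1 + ‖x‖ ^ 2) ^ (σ / 2) : ℝ) • ε n x) p (volume.restrict (A n)ᶜ) ≤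
          ENNReal.ofReal ((5 : ℝ) ^ σ * (2 : ℝ) ^ (-(4 * (n : ℝ))) *
            (1 + (j n : ℝ) ^ 2) ^ (-σ / 2))) ∧
      -- (4) small overlap bound
      (∀ l, 1 ≤ l → l < n →
        eLpNorm (fun x => ((1 + ‖x‖ ^ 2) ^ (σ / 2) : ℝ) • ε l x) p (volume.restrict (A n)) ≤
          ENNReal.ofReal ((5 : ℝ) ^ σ * (2 : ℝ) ^ (-(3 * (n : ℝ))) *
            (1 + (j n : ℝ) ^ 2) ^ (-σ / 2))) := by
  intro n hn
  classical
  set e₁ : EuclideanSpace ℝ (Fin d) := EuclideanSpace.single (⟨0, hd⟩ : Fin d) (1 : ℝ) with he₁def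
  have he₁ : ‖e₁‖ = 1 := by
    rw [he₁def, EuclideanSpace.norm_single]; norm_num
  -- facts about j
  have hmono' : ∀ k m, 1 ≤ m → m ≤ k → j m ≤ j k := by
    intro k
    induction k with
    | zero => intro m hm hk; omega
    | succ k ih =>
      intro m hm hk
      rcases Nat.eq_or_lt_of_le hk with he | hlt
      · rw [he]
      · have h2 := ih m hm (by omega)
        have h1 := hjgrow k (by omega)
        omega
  have hmono : ∀ m, 1 ≤ m → ∀ k, m ≤ k → j m ≤ j k := fun m hm k hk => hmono' k m hm hk
  have hj2 : ∀ m, 1 ≤ m → 2 ≤ j m := fun m hm => le_trans hj1 (hmono 1 le_rfl m hm)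
  -- norms of the translation vectors
  have hvnorm : ∀ c : ℝ, 0 ≤ c → ‖c • e₁‖ = c := by
    intro c hc
    rw [norm_smul, he₁, Real.norm_eq_abs, abs_of_nonneg hc, mul_one]
  have hxy : ∀ (c : ℝ) (x : EuclideanSpace ℝ (Fin d)), 0 ≤ c →
      ‖x‖ ≤ ‖x - c • e₁‖ + c := by
    intro c x hc
    calc ‖x‖ = ‖(x - c • e₁) + c • e₁‖ := by rw [sub_add_cancel]
      _ ≤ ‖x - c • e₁‖ + ‖c • e₁‖ := norm_add_le _ _
      _ = ‖x - c • e₁‖ + c := by rw [hvnorm c hc]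
  have hyx : ∀ (c : ℝ) (x : EuclideanSpace ℝ (Fin d)), 0 ≤ c →
      c ≤ ‖x - c • e₁‖ + ‖x‖ := by
    intro c x hc
    calc c = ‖c • e₁‖ := (hvnorm c hc).symm
      _ = ‖x - (x - c • e₁)‖ := by congr 1; abel
      _ ≤ ‖x‖ + ‖x - c • e₁‖ := norm_sub_le _ _
      _ = ‖x - c • e₁‖ + ‖x‖ := by ring
  -- measurability of weighted functions
  have hwm : ∀ τ : ℝ, Continuous fun x : EuclideanSpace ℝ (Fin d) => ((1 + ‖x‖ ^ 2) ^ τ : ℝ) := by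
    intro τ
    exact Continuous.rpow_const (by continuity) (fun x => Or.inl (by positivity))
  have hGm : AEStronglyMeasurable
      (fun x : EuclideanSpace ℝ (Fin d) => ((1 + ‖x‖ ^ 2) ^ ((2 * σ) / 2) : ℝ) • h x) volume :=
    (((hwm _).measurable).smul hmeas).aestronglyMeasurable
  have hGσm : AEStronglyMeasurable
      (fun x : EuclideanSpace ℝ (Fin d) => ((1 + ‖x‖ ^ 2) ^ (σ / 2) : ℝ) • h x) volume :=
    (((hwm _).measurable).smul hmeas).aestronglyMeasurable
  -- the key estimate used for parts (3) and (4)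
  have key34 : ∀ m : ℕ, ∀ S : Set (EuclideanSpace ℝ (Fin d)),
      (∀ x ∈ S, (j n : ℝ) / 2 ≤ ‖x - (3 / 2 * (j m : ℝ)) • e₁‖) →
      eLpNorm (fun x => ((1 + ‖x‖ ^ 2) ^ (σ / 2) : ℝ) • ε m x) p (volume.restrict S) ≤
        ENNReal.ofReal ((5 : ℝ) ^ σ * (2 : ℝ) ^ (-(m : ℝ)) * (1 + (j n : ℝ) ^ 2) ^ (-σ / 2)) *
          ENNReal.ofReal ((2 : ℝ) ^ (-(3 * (n : ℝ)))) := by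
    intro m S hS
    set v : EuclideanSpace ℝ (Fin d) := (3 / 2 * (j m : ℝ)) • e₁ with hvdef
    set T : Set (EuclideanSpace ℝ (Fin d)) := {x | (j n : ℝ) / 2 ≤ ‖x‖} with hTdef
    have hTmeas : MeasurableSet T := measurableSet_le measurable_const measurable_norm
    have hprem : MeasurableSet ((fun x : EuclideanSpace ℝ (Fin d) => x - v) ⁻¹' T) :=
      hTmeas.preimage (measurable_id.sub measurable_const)
    have hSsub : S ⊆ (fun x : EuclideanSpace ℝ (Fin d) => x - v) ⁻¹' T := fun x hx => hS x hx
    set K : ℝ := (5 : ℝ) ^ σ * (2 : ℝ) ^ (-(m : ℝ)) * (1 + (j n : ℝ) ^ 2) ^ (-σ / 2) with hKdef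
    have hK0 : 0 ≤ K := by positivity
    calc eLpNorm (fun x => ((1 + ‖x‖ ^ 2) ^ (σ / 2) : ℝ) • ε m x) p (volume.restrict S)
        ≤ eLpNorm (fun x => ((1 + ‖x‖ ^ 2) ^ (σ / 2) : ℝ) • ε m x) p
            (volume.restrict ((fun x : EuclideanSpace ℝ (Fin d) => x - v) ⁻¹' T)) :=
          eLpNorm_mono_measure _ (Measure.restrict_mono hSsub le_rfl)
      _ ≤ eLpNorm (K • fun x : EuclideanSpace ℝ (Fin d) =>
            ((1 + ‖x - v‖ ^ 2) ^ ((2 * σ) / 2) : ℝ) • h (x - v)) p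
            (volume.restrict ((fun x : EuclideanSpace ℝ (Fin d) => x - v) ⁻¹' T)) := by
          apply eLpNorm_mono_ae
          rw [ae_restrict_iff' hprem]
          filter_upwards with x hx
          have hx' : (j n : ℝ) / 2 ≤ ‖x - v‖ := hx
          rw [hε m x, ← hvdef]
          have hlhs : ‖((1 + ‖x‖ ^ 2) ^ (σ / 2) : ℝ) •
              ((((2 : ℝ) ^ (-(m : ℝ)) * (1 + (j m : ℝ) ^ 2) ^ (-σ / 2) : ℝ) : ℂ) * h (x - v))‖
              = (1 + ‖x‖ ^ 2) ^ (σ / 2) *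
                (((2 : ℝ) ^ (-(m : ℝ)) * (1 + (j m : ℝ) ^ 2) ^ (-σ / 2)) * ‖h (x - v)‖) := by
            rw [norm_smul, norm_mul, Complex.norm_real, Real.norm_eq_abs, Real.norm_eq_abs,
              abs_of_nonneg (by positivity), abs_of_nonneg (by positivity)]
          have hrhs : ‖(K • fun x : EuclideanSpace ℝ (Fin d) =>
              ((1 + ‖x - v‖ ^ 2) ^ ((2 * σ) / 2) : ℝ) • h (x - v)) x‖
              = K * ((1 + ‖x - v‖ ^ 2) ^ (2 * σ / 2) * ‖h (x - v)‖) := by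
            rw [Pi.smul_apply, norm_smul, norm_smul, Real.norm_eq_abs, Real.norm_eq_abs,
              abs_of_nonneg hK0, abs_of_nonneg (by positivity), mul_assoc]
          rw [hlhs, hrhs, hKdef]
          exact aux_pt34 σ hσ ‖x‖ ‖x - v‖ (j m) (j n) ((2:ℝ) ^ (-(m : ℝ))) ‖h (x - v)‖
            (norm_nonneg _) (norm_nonneg _) (Nat.cast_nonneg _) (Nat.cast_nonneg _)
            (by positivity) (norm_nonneg _) (hxy _ x (by positivity)) hx'
      _ = (‖K‖₊ : ℝ≥0∞) * eLpNorm (fun x : EuclideanSpace ℝ (Fin d) =>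
            ((1 + ‖x - v‖ ^ 2) ^ ((2 * σ) / 2) : ℝ) • h (x - v)) p
            (volume.restrict ((fun x : EuclideanSpace ℝ (Fin d) => x - v) ⁻¹' T)) :=
          eLpNorm_const_smul _ _ _ _
      _ = ENNReal.ofReal K * eLpNorm (fun x => ((1 + ‖x‖ ^ 2) ^ ((2 * σ) / 2) : ℝ) • h x) p
            (volume.restrict T) := by
          rw [show (‖K‖₊ : ℝ≥0∞) = ENNReal.ofReal K from Real.enorm_eq_ofReal hK0]
          congr 1
          exact trans_lemma (fun y => ((1 + ‖y‖ ^ 2) ^ ((2 * σ) / 2) : ℝ) • h y) hGm v p T hTmeas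
      _ ≤ ENNReal.ofReal K * ENNReal.ofReal ((2 : ℝ) ^ (-(3 * (n : ℝ)))) := by
          gcongr
          exact hjtail n hn
  -- constant for step n
  have hCn0 : (0:ℝ) < (2 : ℝ) ^ (-(n : ℝ)) * (1 + (j n : ℝ) ^ 2) ^ (-σ / 2) := by positivity
  have hfe : ε n = ((((2 : ℝ) ^ (-(n : ℝ)) * (1 + (j n : ℝ) ^ 2) ^ (-σ / 2) : ℝ) : ℂ)) •
      (fun x => h (x - (3 / 2 * (j n : ℝ)) • e₁)) := by
    funext x
    rw [hε n x]
    simp [smul_eq_mul]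
  refine ⟨?_, ?_, ?_, ?_, ?_⟩
  · -- (1a)
    set v : EuclideanSpace ℝ (Fin d) := (3 / 2 * (j n : ℝ)) • e₁ with hvdef
    have hK : (0:ℝ) ≤ (5:ℝ) ^ σ * (2:ℝ) ^ (-(n:ℝ)) := by positivity
    calc eLpNorm (fun x => ((1 + ‖x‖ ^ 2) ^ (σ / 2) : ℝ) • ε n x) p volume
        ≤ eLpNorm ((((5:ℝ) ^ σ * (2:ℝ) ^ (-(n:ℝ))) : ℝ) • fun x : EuclideanSpace ℝ (Fin d) =>
            ((1 + ‖x - v‖ ^ 2) ^ (σ / 2) : ℝ) • h (x - v)) p volume := by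
          apply eLpNorm_mono
          intro x
          rw [hε n x, ← hvdef]
          have hlhs : ‖((1 + ‖x‖ ^ 2) ^ (σ / 2) : ℝ) •
              ((((2 : ℝ) ^ (-(n : ℝ)) * (1 + (j n : ℝ) ^ 2) ^ (-σ / 2) : ℝ) : ℂ) * h (x - v))‖
              = (1 + ‖x‖ ^ 2) ^ (σ / 2) *
                (((2 : ℝ) ^ (-(n : ℝ)) * (1 + (j n : ℝ) ^ 2) ^ (-σ / 2)) * ‖h (x - v)‖) := by
            rw [norm_smul, norm_mul, Complex.norm_real, Real.norm_eq_abs, Real.norm_eq_abs,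
              abs_of_nonneg (by positivity), abs_of_nonneg (by positivity)]
          have hrhs : ‖((((5:ℝ) ^ σ * (2:ℝ) ^ (-(n:ℝ))) : ℝ) • fun x : EuclideanSpace ℝ (Fin d) =>
              ((1 + ‖x - v‖ ^ 2) ^ (σ / 2) : ℝ) • h (x - v)) x‖
              = ((5:ℝ) ^ σ * (2:ℝ) ^ (-(n:ℝ))) * ((1 + ‖x - v‖ ^ 2) ^ (σ / 2) * ‖h (x - v)‖) := by
            rw [Pi.smul_apply, norm_smul, norm_smul, Real.norm_eq_abs, Real.norm_eq_abs,
              abs_of_nonneg hK, abs_of_nonneg (by positivity), mul_assoc]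
          rw [hlhs, hrhs]
          exact aux_pt1 σ hσ ‖x‖ ‖x - v‖ (j n) ((2:ℝ) ^ (-(n : ℝ))) ‖h (x - v)‖
            (norm_nonneg _) (norm_nonneg _) (Nat.cast_nonneg _) (by positivity)
            (norm_nonneg _) (hxy _ x (by positivity))
      _ = (‖((5:ℝ) ^ σ * (2:ℝ) ^ (-(n:ℝ)) : ℝ)‖₊ : ℝ≥0∞) *
            eLpNorm (fun x : EuclideanSpace ℝ (Fin d) =>
              ((1 + ‖x - v‖ ^ 2) ^ (σ / 2) : ℝ) • h (x - v)) p volume :=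
          eLpNorm_const_smul _ _ _ _
      _ = ENNReal.ofReal ((5 : ℝ) ^ σ * (2 : ℝ) ^ (-(n : ℝ))) *
            eLpNorm (fun x => ((1 + ‖x‖ ^ 2) ^ (σ / 2) : ℝ) • h x) p volume := by
          rw [show (‖((5:ℝ) ^ σ * (2:ℝ) ^ (-(n:ℝ)) : ℝ)‖₊ : ℝ≥0∞) = ENNReal.ofReal ((5:ℝ) ^ σ * (2:ℝ) ^ (-(n:ℝ))) from Real.enorm_eq_ofReal hK]
          congr 1
          have htr := trans_lemma (fun y => ((1 + ‖y‖ ^ 2) ^ (σ / 2) : ℝ) • h y) hGσm v p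
            Set.univ MeasurableSet.univ
          simpa using htr
  · -- (1b)
    rw [hfe, eLpNorm_const_smul, ← ofReal_norm, Complex.norm_real, Real.norm_of_nonneg hCn0.le]
    congr 1
    have htr := trans_lemma h hmeas.aestronglyMeasurable ((3 / 2 * (j n : ℝ)) • e₁) q
      Set.univ MeasurableSet.univ
    simpa using htr
  · -- (2)
    have hJ2 : (2:ℝ) ≤ (j n : ℝ) := by exact_mod_cast hj2 n hn
    have hsub : Metric.ball ((3 / 2 * (j n : ℝ)) • e₁) 1 ⊆ A n := by
      rw [hA n]
      intro x hx
      rw [Metric.mem_ball, dist_eq_norm] at hx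
      have h1 := hxy (3 / 2 * (j n : ℝ)) x (by positivity)
      have h2 := hyx (3 / 2 * (j n : ℝ)) x (by positivity)
      exact ⟨by linarith, by linarith⟩
    have hball : (fun x : EuclideanSpace ℝ (Fin d) => x - (3 / 2 * (j n : ℝ)) • e₁) ⁻¹'
        (Metric.ball 0 1) = Metric.ball ((3 / 2 * (j n : ℝ)) • e₁) 1 := by
      ext x
      simp [Metric.mem_ball, dist_eq_norm]
    calc ENNReal.ofReal ((2 : ℝ) ^ (-(n : ℝ)) * (1 + (j n : ℝ) ^ 2) ^ (-σ / 2))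
        = ENNReal.ofReal ((2 : ℝ) ^ (-(n : ℝ)) * (1 + (j n : ℝ) ^ 2) ^ (-σ / 2)) * 1 :=
          (mul_one _).symm
      _ ≤ ENNReal.ofReal ((2 : ℝ) ^ (-(n : ℝ)) * (1 + (j n : ℝ) ^ 2) ^ (-σ / 2)) *
            eLpNorm h q (volume.restrict (Metric.ball 0 1)) := mul_le_mul_right hmassq _
      _ = eLpNorm (ε n) q (volume.restrict (Metric.ball ((3 / 2 * (j n : ℝ)) • e₁) 1)) := by
          rw [hfe, eLpNorm_const_smul, ← ofReal_norm, Complex.norm_real, Real.norm_of_nonneg hCn0.le,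
            ← hball, trans_lemma h hmeas.aestronglyMeasurable _ q (Metric.ball 0 1)
              measurableSet_ball]
      _ ≤ eLpNorm (ε n) q (volume.restrict (A n)) :=
          eLpNorm_mono_measure _ (Measure.restrict_mono hsub le_rfl)
  · -- (3)
    have hsub : ∀ x ∈ (A n)ᶜ, (j n : ℝ) / 2 ≤ ‖x - (3 / 2 * (j n : ℝ)) • e₁‖ := by
      intro x hx
      rw [hA n] at hx
      simp only [Set.mem_compl_iff, Set.mem_setOf_eq, not_and_or, not_le] at hx
      have h1 := hxy (3 / 2 * (j n : ℝ)) x (by positivity)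
      have h2 := hyx (3 / 2 * (j n : ℝ)) x (by positivity)
      have hJ0 : (0:ℝ) ≤ (j n : ℝ) := Nat.cast_nonneg _
      rcases hx with hx | hx
      · linarith
      · linarith
    refine le_trans (key34 n ((A n)ᶜ) hsub) (le_of_eq ?_)
    rw [← ENNReal.ofReal_mul (by positivity)]
    congr 1
    have h2pow : (2:ℝ) ^ (-(n:ℝ)) * (2:ℝ) ^ (-(3 * (n:ℝ))) = (2:ℝ) ^ (-(4 * (n:ℝ))) := by
      rw [← Real.rpow_add (by norm_num)]
      congr 1
      ring
    linear_combination ((5:ℝ) ^ σ * (1 + (j n : ℝ) ^ 2) ^ (-σ / 2)) * h2pow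
  · -- (4)
    intro l hl hln
    have hj3 : (3:ℝ) * (j l : ℝ) ≤ (j n : ℝ) := by
      exact_mod_cast le_trans (hjgrow l hl) (hmono (l+1) (by omega) n (by omega))
    have hsub : ∀ x ∈ A n, (j n : ℝ) / 2 ≤ ‖x - (3 / 2 * (j l : ℝ)) • e₁‖ := by
      intro x hx
      rw [hA n] at hx
      obtain ⟨hx1, hx2⟩ := hx
      have h1 := hxy (3 / 2 * (j l : ℝ)) x (by positivity)
      linarith
    have hle1 : (2:ℝ) ^ (-(l:ℝ)) ≤ 1 :=
      Real.rpow_le_one_of_one_le_of_nonpos (by norm_num) (neg_nonpos.mpr (Nat.cast_nonneg l))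
    have hstep : ENNReal.ofReal ((5:ℝ) ^ σ * (2:ℝ) ^ (-(l:ℝ)) * (1 + (j n:ℝ) ^ 2) ^ (-σ/2)) *
          ENNReal.ofReal ((2:ℝ) ^ (-(3 * (n:ℝ)))) ≤
        ENNReal.ofReal ((5:ℝ) ^ σ * 1 * (1 + (j n:ℝ) ^ 2) ^ (-σ/2)) *
          ENNReal.ofReal ((2:ℝ) ^ (-(3 * (n:ℝ)))) := by
      gcongr
    have heq : ENNReal.ofReal ((5:ℝ) ^ σ * 1 * (1 + (j n:ℝ) ^ 2) ^ (-σ/2)) *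
          ENNReal.ofReal ((2:ℝ) ^ (-(3 * (n:ℝ)))) =
        ENNReal.ofReal ((5 : ℝ) ^ σ * (2 : ℝ) ^ (-(3 * (n : ℝ))) *
          (1 + (j n : ℝ) ^ 2) ^ (-σ / 2)) := by
      rw [← ENNReal.ofReal_mul (by positivity)]
      congr 1
      ring
    exact le_trans (key34 l (A n) hsub) (le_trans hstep (le_of_eq heq))
end

section
/- Let d ≥ 1, σ ≥ 0, p ∈ [1, ∞), let h : ℝ^d → ℂ be measurable, let a ∈ ℝ^d, R > 0, and let S ⊆ ℝ^d be measurable with S − a ⊆ {x ∈ ℝ^d : |x| ≥ R}. Then ‖⟨·⟩^σ h(· − a)‖_{L^p(S)} ≤ 2^{σ/2} (⟨a⟩/⟨R⟩)^σ ‖⟨·⟩^{2σ} h‖_{L^p(\{|x| ≥ R\})} (an inequality in [0, ∞]). -/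
open MeasureTheory ENNReal

/-- **Weighted tail bound for translates.**
If `S − a ⊆ {|x| ≥ R}`, then
`‖⟨·⟩^σ h(· − a)‖_{L^p(S)} ≤ 2^{σ/2} (⟨a⟩/⟨R⟩)^σ ‖⟨·⟩^{2σ} h‖_{L^p({|x| ≥ R})}` (in `[0,∞]`). -/
theorem weighted_Lp_norm_translate_tail_le
    (d : ℕ) (hd : 1 ≤ d) (σ : ℝ) (hσ : 0 ≤ σ) (p : ℝ≥0∞) (hp : 1 ≤ p) (hp' : p ≠ ∞)
    (h : EuclideanSpace ℝ (Fin d) → ℂ) (hmeas : Measurable h)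
    (a : EuclideanSpace ℝ (Fin d)) (R : ℝ) (hR : 0 < R)
    (S : Set (EuclideanSpace ℝ (Fin d))) (hS : MeasurableSet S)
    (hSa : (fun x => x - a) '' S ⊆ {x : EuclideanSpace ℝ (Fin d) | R ≤ ‖x‖}) :
    eLpNorm (fun x => ((1 + ‖x‖ ^ 2) ^ (σ / 2) : ℝ) • h (x - a)) p (volume.restrict S) ≤
      ENNReal.ofReal ((2 : ℝ) ^ (σ / 2) *
          ((1 + ‖a‖ ^ 2) ^ ((1 : ℝ) / 2) / (1 + R ^ 2) ^ ((1 : ℝ) / 2)) ^ σ) *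
        eLpNorm (fun x => ((1 + ‖x‖ ^ 2) ^ ((2 * σ) / 2) : ℝ) • h x) p
          (volume.restrict {x : EuclideanSpace ℝ (Fin d) | R ≤ ‖x‖}) := by
  set T : Set (EuclideanSpace ℝ (Fin d)) := {x | R ≤ ‖x‖} with hT
  set C : ℝ := (2 : ℝ) ^ (σ / 2) *
      ((1 + ‖a‖ ^ 2) ^ ((1 : ℝ) / 2) / (1 + R ^ 2) ^ ((1 : ℝ) / 2)) ^ σ with hCdef
  have hC : 0 ≤ C := by positivity
  set S' : Set (EuclideanSpace ℝ (Fin d)) := (fun x => x - a) '' S with hS'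
  -- the translated weight function
  set g : EuclideanSpace ℝ (Fin d) → ℂ :=
    fun y => ((1 + ‖y + a‖ ^ 2) ^ (σ / 2) : ℝ) • h y with hg
  have hgmeas : AEStronglyMeasurable g volume := by
    apply Measurable.aestronglyMeasurable
    have cw : Continuous fun y : EuclideanSpace ℝ (Fin d) => ((1 + ‖y + a‖ ^ 2) ^ (σ / 2) : ℝ) :=
      (continuous_const.add ((continuous_add_right a).norm.pow 2)).rpow_const
        (fun x => Or.inr (by positivity))
    exact cw.measurable.smul hmeas
  -- Step 1 : translation invariance
  have hmp : MeasurePreserving (fun x => x - a) (volume.restrict S) (volume.restrict S') :=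
    (measurePreserving_sub_right volume a).restrict_image_emb
      (MeasurableEquiv.subRight a).measurableEmbedding S
  have step1 : eLpNorm (fun x => ((1 + ‖x‖ ^ 2) ^ (σ / 2) : ℝ) • h (x - a)) p
      (volume.restrict S) = eLpNorm g p (volume.restrict S') := by
    rw [← eLpNorm_comp_measurePreserving hgmeas.restrict hmp]
    apply eLpNorm_congr_ae
    filter_upwards with x
    simp [g, Function.comp, sub_add_cancel]
  -- Step 2 : pointwise bound on S' ⊆ T
  have hsub : S' ⊆ T := hSa
  set G : EuclideanSpace ℝ (Fin d) → ℂ :=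
    fun y => C • (((1 + ‖y‖ ^ 2) ^ ((2 * σ) / 2) : ℝ) • h y) with hG
  have hpt : ∀ y ∈ S', ‖g y‖ ≤ ‖G y‖ := by
    intro y hy
    have hyR : R ≤ ‖y‖ := hsub hy
    have h1 : (0:ℝ) < 1 + ‖y + a‖ ^ 2 := by positivity
    have h2 : (0:ℝ) < 1 + ‖a‖ ^ 2 := by positivity
    have h3 : (0:ℝ) < 1 + ‖y‖ ^ 2 := by positivity
    have h4 : (0:ℝ) < 1 + R ^ 2 := by positivity
    have key : (1 + ‖y + a‖ ^ 2) ^ (σ / 2) ≤ C * (1 + ‖y‖ ^ 2) ^ ((2 * σ) / 2) := by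
      have hya : ‖y + a‖ ≤ ‖y‖ + ‖a‖ := norm_add_le _ _
      have hb1 : 1 + ‖y + a‖ ^ 2 ≤ 2 * ((1 + ‖a‖ ^ 2) * (1 + ‖y‖ ^ 2)) := by
        nlinarith [norm_nonneg y, norm_nonneg a, norm_nonneg (y + a), sq_nonneg (‖y‖ - ‖a‖)]
      have hs2 : (0:ℝ) ≤ σ / 2 := by positivity
      calc (1 + ‖y + a‖ ^ 2) ^ (σ / 2)
          ≤ (2 * ((1 + ‖a‖ ^ 2) * (1 + ‖y‖ ^ 2))) ^ (σ / 2) :=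
            Real.rpow_le_rpow (le_of_lt h1) hb1 hs2
        _ = 2 ^ (σ / 2) * ((1 + ‖a‖ ^ 2) ^ (σ / 2) * (1 + ‖y‖ ^ 2) ^ (σ / 2)) := by
            rw [Real.mul_rpow (by norm_num) (by positivity),
              Real.mul_rpow (le_of_lt h2) (le_of_lt h3)]
        _ ≤ C * (1 + ‖y‖ ^ 2) ^ ((2 * σ) / 2) := by
            rw [hCdef]
            have hRy : (1 + R ^ 2) ^ (σ / 2) ≤ (1 + ‖y‖ ^ 2) ^ (σ / 2) := by
              apply Real.rpow_le_rpow (le_of_lt h4) _ hs2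
              nlinarith [hR.le]
            have e1 : ((1 + ‖a‖ ^ 2) ^ ((1:ℝ)/2) / (1 + R ^ 2) ^ ((1:ℝ)/2)) ^ σ
                = (1 + ‖a‖ ^ 2) ^ (σ / 2) / (1 + R ^ 2) ^ (σ / 2) := by
              rw [Real.div_rpow (by positivity) (by positivity),
                ← Real.rpow_mul h2.le, ← Real.rpow_mul h4.le]
              ring_nf
            rw [e1]
            have e2 : (1 + ‖y‖ ^ 2) ^ ((2 * σ) / 2)
                = (1 + ‖y‖ ^ 2) ^ (σ / 2) * (1 + ‖y‖ ^ 2) ^ (σ / 2) := by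
              rw [← Real.rpow_add h3]; ring_nf
            rw [e2]
            set A := (2:ℝ) ^ (σ / 2)
            set B := (1 + ‖a‖ ^ 2) ^ (σ / 2)
            set Y := (1 + ‖y‖ ^ 2) ^ (σ / 2)
            set Rp := (1 + R ^ 2) ^ (σ / 2)
            have hRp : (0:ℝ) < Rp := Real.rpow_pos_of_pos h4 _
            have hrw : A * (B / Rp) * (Y * Y) = A * B * Y * (Y / Rp) := by
              field_simp
            rw [hrw]
            have h1' : (1:ℝ) ≤ Y / Rp := (one_le_div hRp).2 hRy
            calc A * (B * Y) = A * B * Y * 1 := by ring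
              _ ≤ A * B * Y * (Y / Rp) :=
                mul_le_mul_of_nonneg_left h1' (by positivity)
    have : ‖g y‖ = (1 + ‖y + a‖ ^ 2) ^ (σ / 2) * ‖h y‖ := by
      simp [g, norm_smul, abs_of_pos (Real.rpow_pos_of_pos h1 _)]
    rw [this]
    have : ‖G y‖ = C * ((1 + ‖y‖ ^ 2) ^ ((2 * σ) / 2) * ‖h y‖) := by
      simp [G, norm_smul, abs_of_pos (Real.rpow_pos_of_pos h3 _), abs_of_nonneg hC]
    rw [this, ← mul_assoc]
    exact mul_le_mul_of_nonneg_right key (norm_nonneg _)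
  have hS'm : MeasurableSet S' := by
    have : S' = (fun x => x + a) ⁻¹' S := by
      ext y
      constructor
      · rintro ⟨x, hx, rfl⟩; simpa using hx
      · intro hy; exact ⟨y + a, hy, by simp⟩
    rw [this]
    exact hS.preimage (measurable_add_const a)
  have step2 : eLpNorm g p (volume.restrict S') ≤ eLpNorm G p (volume.restrict S') := by
    apply eLpNorm_mono_ae
    exact (ae_restrict_iff' hS'm).2 (Filter.Eventually.of_forall hpt)
  have step3 : eLpNorm G p (volume.restrict S') ≤ eLpNorm G p (volume.restrict T) :=
    eLpNorm_mono_measure _ (Measure.restrict_mono hsub le_rfl)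
  have step4 : eLpNorm G p (volume.restrict T)
      = ENNReal.ofReal C *
        eLpNorm (fun x => ((1 + ‖x‖ ^ 2) ^ ((2 * σ) / 2) : ℝ) • h x) p (volume.restrict T) := by
    have hGC : G = C • (fun x => ((1 + ‖x‖ ^ 2) ^ ((2 * σ) / 2) : ℝ) • h x) := rfl
    rw [hGC, eLpNorm_const_smul]
    congr 1
    simp [Real.enorm_of_nonneg hC, Real.nnnorm_of_nonneg hC, ENNReal.ofReal, Real.toNNReal_of_nonneg hC]
  calc eLpNorm (fun x => ((1 + ‖x‖ ^ 2) ^ (σ / 2) : ℝ) • h (x - a)) p (volume.restrict S)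
      = eLpNorm g p (volume.restrict S') := step1
    _ ≤ eLpNorm G p (volume.restrict S') := step2
    _ ≤ eLpNorm G p (volume.restrict T) := step3
    _ = ENNReal.ofReal C *
        eLpNorm (fun x => ((1 + ‖x‖ ^ 2) ^ ((2 * σ) / 2) : ℝ) • h x) p (volume.restrict T) := step4
end

section
/- Let (S, μ) be a measure space, p ∈ [1, ∞], and F₁, F₂ ∈ L^p(μ; ℂ). Then for every λ₀ ∈ ℂ there exists λ ∈ ℂ with |λ| = 1 such that ‖F₂ − λ F₁‖_{L^p(μ)} ≤ 2 ‖F₂ − λ₀ F₁‖_{L^p(μ)} + ‖ |F₁| − |F₂| ‖_{L^p(μ)}. In particular, inf_{|λ| = 1} ‖F₂ − λ F₁‖_{L^p(μ)} ≤ 2 · inf_{λ ∈ ℂ} ‖F₂ − λ F₁‖_{L^p(μ)} + ‖ |F₁| − |F₂| ‖_{L^p(μ)}. -/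
open MeasureTheory ENNReal

/-- **Reduction from arbitrary to unimodular phase factors.**
For `F₁, F₂ ∈ L^p(μ; ℂ)` and any `λ₀ ∈ ℂ` there is a unimodular `λ` with
`‖F₂ − λF₁‖_p ≤ 2‖F₂ − λ₀F₁‖_p + ‖|F₁| − |F₂|‖_p`; in particular
`inf_{|λ|=1} ‖F₂ − λF₁‖_p ≤ 2 inf_{λ∈ℂ} ‖F₂ − λF₁‖_p + ‖|F₁| − |F₂|‖_p`. -/
theorem unimodular_phase_reduction
    {S : Type*} [MeasurableSpace S] (μ : Measure S) (p : ℝ≥0∞) (hp : 1 ≤ p)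
    (F₁ F₂ : S → ℂ) (h1 : MemLp F₁ p μ) (h2 : MemLp F₂ p μ) :
    (∀ l₀ : ℂ, ∃ l : ℂ, ‖l‖ = 1 ∧
      eLpNorm (fun x => F₂ x - l * F₁ x) p μ ≤
        2 * eLpNorm (fun x => F₂ x - l₀ * F₁ x) p μ +
          eLpNorm (fun x => ‖F₁ x‖ - ‖F₂ x‖) p μ) ∧
    (⨅ (l : ℂ) (_ : ‖l‖ = 1), eLpNorm (fun x => F₂ x - l * F₁ x) p μ) ≤
      2 * (⨅ l₀ : ℂ, eLpNorm (fun x => F₂ x - l₀ * F₁ x) p μ) +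
        eLpNorm (fun x => ‖F₁ x‖ - ‖F₂ x‖) p μ := by
  have m1 : AEStronglyMeasurable F₁ μ := h1.1
  have m2 : AEStronglyMeasurable F₂ μ := h2.1
  set B := eLpNorm (fun x => ‖F₁ x‖ - ‖F₂ x‖) p μ with hBdef
  have key : ∀ l₀ : ℂ, ∃ l : ℂ, ‖l‖ = 1 ∧
      eLpNorm (fun x => F₂ x - l * F₁ x) p μ ≤
        2 * eLpNorm (fun x => F₂ x - l₀ * F₁ x) p μ + B := by
    intro l₀
    set l : ℂ := if l₀ = 0 then 1 else l₀ / (‖l₀‖ : ℂ) with hldef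
    have hl1 : ‖l‖ = 1 := by
      by_cases h : l₀ = 0
      · simp [hldef, h]
      · have h' : ‖l₀‖ ≠ 0 := norm_ne_zero_iff.mpr h
        simp [hldef, h, norm_div, Complex.norm_real, abs_of_nonneg (norm_nonneg l₀),
          div_self h']
    have hdiff : ‖l₀ - l‖ = |‖l₀‖ - 1| := by
      by_cases h : l₀ = 0
      · simp [hldef, h]
      · have h' : (‖l₀‖ : ℂ) ≠ 0 := by
          simpa using norm_ne_zero_iff.mpr h
        have : l₀ - l = l₀ * ((‖l₀‖ - 1 : ℝ) / ‖l₀‖ : ℂ) := by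
          have hinv : ((‖l₀‖ : ℝ) : ℂ) * ((‖l₀‖ : ℝ) : ℂ)⁻¹ = 1 :=
            mul_inv_cancel₀ (by simpa using h')
          have h'' : ((‖l₀‖ : ℝ) : ℂ) ≠ 0 := by
            simpa using h'
          simp only [hldef, if_neg h]
          push_cast
          rw [← mul_div_assoc, mul_sub, mul_one, sub_div, mul_div_assoc, div_self h', mul_one]
        rw [this, norm_mul]
        have h0 : ‖l₀‖ ≠ 0 := norm_ne_zero_iff.mpr h
        rw [norm_div, Complex.norm_real, Complex.norm_real, Real.norm_eq_abs,
          Real.norm_eq_abs, abs_of_nonneg (norm_nonneg l₀)]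
        rw [mul_comm]
        exact div_mul_cancel₀ _ h0
    set A := eLpNorm (fun x => F₂ x - l₀ * F₁ x) p μ with hAdef
    refine ⟨l, hl1, ?_⟩
    have mA : AEStronglyMeasurable (fun x => F₂ x - l₀ * F₁ x) μ :=
      m2.sub (m1.const_mul l₀)
    have mg : AEStronglyMeasurable (fun x => (l₀ - l) * F₁ x) μ :=
      m1.const_mul _
    -- pointwise bound for g
    have hg_bound : ∀ x, ‖(l₀ - l) * F₁ x‖ ≤
        ‖F₂ x - l₀ * F₁ x‖ + |‖F₁ x‖ - ‖F₂ x‖| := by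
      intro x
      rw [norm_mul, hdiff]
      have e1 : |‖l₀‖ - 1| * ‖F₁ x‖ = |‖l₀ * F₁ x‖ - ‖F₁ x‖| := by
        rw [norm_mul, ← abs_of_nonneg (norm_nonneg (F₁ x)), ← abs_mul, sub_mul, one_mul,
          abs_of_nonneg (norm_nonneg (F₁ x))]
      rw [e1]
      have h2' : |‖l₀ * F₁ x‖ - ‖F₁ x‖| ≤ |‖l₀ * F₁ x‖ - ‖F₂ x‖| + |‖F₂ x‖ - ‖F₁ x‖| := by
        have := abs_sub_le (‖l₀ * F₁ x‖) (‖F₂ x‖) (‖F₁ x‖)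
        linarith
      refine h2'.trans (add_le_add ?_ ?_)
      · have := abs_norm_sub_norm_le (l₀ * F₁ x) (F₂ x)
        calc |‖l₀ * F₁ x‖ - ‖F₂ x‖| ≤ ‖l₀ * F₁ x - F₂ x‖ := this
          _ = ‖F₂ x - l₀ * F₁ x‖ := by rw [← norm_neg]; ring_nf
      · rw [abs_sub_comm]
    -- eLpNorm of g
    have hg : eLpNorm (fun x => (l₀ - l) * F₁ x) p μ ≤ A + B := by
      have step1 : eLpNorm (fun x => (l₀ - l) * F₁ x) p μ ≤
          eLpNorm (fun x => ‖F₂ x - l₀ * F₁ x‖ +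
            |‖F₁ x‖ - ‖F₂ x‖|) p μ :=
        eLpNorm_mono_real hg_bound
      have mabs : AEStronglyMeasurable
          (fun x => |‖F₁ x‖ - ‖F₂ x‖|) μ := by
        have : AEStronglyMeasurable
            (fun x => ‖F₁ x‖ - ‖F₂ x‖) μ := by
          exact m1.norm.sub m2.norm
        simpa [Real.norm_eq_abs] using this.norm
      have step2 : eLpNorm (fun x => ‖F₂ x - l₀ * F₁ x‖ +
            |‖F₁ x‖ - ‖F₂ x‖|) p μ ≤
          eLpNorm (fun x => ‖F₂ x - l₀ * F₁ x‖) p μ +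
            eLpNorm (fun x => |‖F₁ x‖ - ‖F₂ x‖|) p μ :=
        eLpNorm_add_le mA.norm mabs hp
      have e2 : eLpNorm (fun x => ‖F₂ x - l₀ * F₁ x‖) p μ = A := eLpNorm_norm _
      have e3 : eLpNorm (fun x => |‖F₁ x‖ - ‖F₂ x‖|) p μ = B := by
        rw [hBdef]
        simpa [Real.norm_eq_abs] using
          eLpNorm_norm (μ := μ) (p := p)
            (fun x => ‖F₁ x‖ - ‖F₂ x‖)
      calc eLpNorm (fun x => (l₀ - l) * F₁ x) p μ ≤ _ := step1
        _ ≤ _ := step2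
        _ = A + B := by rw [e2, e3]
    have decomp : (fun x => F₂ x - l * F₁ x) =
        fun x => (F₂ x - l₀ * F₁ x) + (l₀ - l) * F₁ x := by
      funext x; ring
    calc eLpNorm (fun x => F₂ x - l * F₁ x) p μ
        = eLpNorm (fun x => (F₂ x - l₀ * F₁ x) + (l₀ - l) * F₁ x) p μ := by rw [decomp]
      _ ≤ A + eLpNorm (fun x => (l₀ - l) * F₁ x) p μ := eLpNorm_add_le mA mg hp
      _ ≤ A + (A + B) := add_le_add (le_refl _) hg
      _ = 2 * A + B := by rw [two_mul, add_assoc]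
  refine ⟨key, ?_⟩
  have : (⨅ (l : ℂ) (_ : ‖l‖ = 1), eLpNorm (fun x => F₂ x - l * F₁ x) p μ) ≤
      ⨅ l₀ : ℂ, (2 * eLpNorm (fun x => F₂ x - l₀ * F₁ x) p μ + B) := by
    refine le_iInf fun l₀ => ?_
    obtain ⟨l, hl1, hle⟩ := key l₀
    exact le_trans (iInf₂_le l hl1) hle
  refine this.trans ?_
  rw [ENNReal.mul_iInf_of_ne (by norm_num) (by norm_num), ENNReal.iInf_add]
end

section
/- Let F₁, F₂ : ℂ → ℂ be complex-differentiable at a point z₀ ∈ ℂ with F₁(z₀) ≠ 0 and F₂(z₀) ≠ 0. Then |F₂′(z₀) − F₂(z₀) F₁′(z₀)/F₁(z₀)| ≤ ‖D|F₂|(z₀) − D|F₁|(z₀)‖ + (‖D|F₁|(z₀)‖ / |F₁(z₀)|) · | |F₁(z₀)| − |F₂(z₀)| |, where the left-hand side equals |F₁(z₀)| · |(F₂/F₁)′(z₀)|. -/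
open Complex in
noncomputable def lmapAux (w : ℂ) : ℂ →L[ℝ] ℝ :=
  Complex.reCLM.comp ((ContinuousLinearMap.mul ℝ ℂ) w)

lemma lmapAux_apply (w h : ℂ) : lmapAux w h = (w * h).re := rfl

lemma lmapAux_sub (w₁ w₂ : ℂ) : lmapAux w₂ - lmapAux w₁ = lmapAux (w₂ - w₁) := by
  ext h
  simp [lmapAux_apply, sub_mul]

lemma norm_lmapAux (w : ℂ) : ‖lmapAux w‖ = ‖w‖ := by
  apply le_antisymm
  · refine ContinuousLinearMap.opNorm_le_bound _ (norm_nonneg w) fun h => ?_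
    have : ‖lmapAux w h‖ = |(w * h).re| := rfl
    rw [this]
    calc |(w * h).re| ≤ ‖w * h‖ := Complex.abs_re_le_norm _
    _ = ‖w‖ * ‖h‖ := by rw [norm_mul]
  · rcases eq_or_ne w 0 with rfl | hw
    · simp
    · have h := (lmapAux w).le_opNorm ((starRingEnd ℂ) w)
      have h1 : lmapAux w ((starRingEnd ℂ) w) = ‖w‖ ^ 2 := by
        rw [lmapAux_apply, Complex.mul_conj, ← Complex.sq_norm, Complex.ofReal_re]
      have h2 : ‖(starRingEnd ℂ) w‖ = ‖w‖ := by simp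
      rw [h1, h2] at h
      have hpos : 0 < ‖w‖ := norm_pos_iff.mpr hw
      have : ‖w‖ ^ 2 ≤ ‖lmapAux w‖ * ‖w‖ := le_trans (le_abs_self _) h
      calc ‖w‖ = ‖w‖ ^ 2 / ‖w‖ := by field_simp [sq]
      _ ≤ ‖lmapAux w‖ * ‖w‖ / ‖w‖ := by gcongr
      _ = ‖lmapAux w‖ := by field_simp

lemma abs_hasFDerivAt (F : ℂ → ℂ) (z₀ : ℂ) (h : DifferentiableAt ℂ F z₀)
    (h0 : F z₀ ≠ 0) :
    HasFDerivAt (fun z => ‖F z‖)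
      (lmapAux ((starRingEnd ℂ) (F z₀) * deriv F z₀ / (‖F z₀‖ : ℂ))) z₀ := by
  have hF : HasFDerivAt F ((deriv F z₀) • (1 : ℂ →L[ℝ] ℂ)) z₀ :=
    h.hasDerivAt.complexToReal_fderiv
  have hsq := hF.norm_sq
  have hne : ‖F z₀‖ ^ 2 ≠ 0 := pow_ne_zero 2 (norm_ne_zero_iff.2 h0)
  have hsqrt := hsq.sqrt hne
  have heq : (fun z => Real.sqrt (‖F z‖ ^ 2)) = fun z => ‖F z‖ := by
    funext z
    rw [Real.sqrt_sq (norm_nonneg _)]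
  rw [heq] at hsqrt
  refine hsqrt.congr_fderiv ?_
  ext h'
  have habs : Real.sqrt (‖F z₀‖ ^ 2) = ‖F z₀‖ := by
    rw [Real.sqrt_sq (norm_nonneg _)]
  have hpos : (0:ℝ) < ‖F z₀‖ := norm_pos_iff.mpr h0
  simp only [lmapAux_apply, ContinuousLinearMap.smul_apply, habs,
    ContinuousLinearMap.smul_apply, ContinuousLinearMap.comp_apply, nsmul_eq_smul,
    smul_eq_mul, innerSL_apply_apply, ContinuousLinearMap.one_apply]
  rw [Complex.inner]
  have : (starRingEnd ℂ) (F z₀) * deriv F z₀ / (‖F z₀‖ : ℂ) * h' =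
      ((‖F z₀‖)⁻¹ : ℝ) • ((starRingEnd ℂ) (F z₀) * (deriv F z₀ • h')) := by
    rw [Complex.real_smul]
    push_cast
    field_simp
    ring
  rw [this]
  rw [Complex.smul_re]
  field_simp
  have e : deriv F z₀ * h' * (starRingEnd ℂ) (F z₀) = (starRingEnd ℂ) (F z₀) * deriv F z₀ • h' := by
    rw [smul_eq_mul]; ring
  rw [e, nsmul_eq_mul, smul_eq_mul, smul_eq_mul, mul_assoc (2:ℝ), ← mul_assoc ‖F z₀‖, mul_one_div_cancel hpos.ne', one_mul,
    Nat.cast_ofNat]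

/-- **Pointwise derivative comparison for moduli of holomorphic functions.**
If `F₁, F₂` are complex-differentiable at `z₀` with `F₁(z₀), F₂(z₀) ≠ 0`, then
`|F₂′(z₀) − F₂(z₀)F₁′(z₀)/F₁(z₀)| ≤ ‖D|F₂|(z₀) − D|F₁|(z₀)‖ +
(‖D|F₁|(z₀)‖/|F₁(z₀)|)·||F₁(z₀)| − |F₂(z₀)||`, where the left-hand side equals
`|F₁(z₀)|·|(F₂/F₁)′(z₀)|`. -/
theorem deriv_quotient_bound_by_moduli
    (F₁ F₂ : ℂ → ℂ) (z₀ : ℂ)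
    (h1 : DifferentiableAt ℂ F₁ z₀) (h2 : DifferentiableAt ℂ F₂ z₀)
    (h10 : F₁ z₀ ≠ 0) (h20 : F₂ z₀ ≠ 0) :
    ‖deriv F₂ z₀ - F₂ z₀ * deriv F₁ z₀ / F₁ z₀‖ =
      ‖F₁ z₀‖ * ‖deriv (fun z => F₂ z / F₁ z) z₀‖ ∧
    ‖deriv F₂ z₀ - F₂ z₀ * deriv F₁ z₀ / F₁ z₀‖ ≤
      ‖fderiv ℝ (fun z => ‖F₂ z‖) z₀ -
          fderiv ℝ (fun z => ‖F₁ z‖) z₀‖ +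
        (‖fderiv ℝ (fun z => ‖F₁ z‖) z₀‖ / ‖F₁ z₀‖) *
          |‖F₁ z₀‖ - ‖F₂ z₀‖| := by
  set a := F₁ z₀ with ha_def
  set b := F₂ z₀ with hb_def
  set a' := deriv F₁ z₀ with ha'_def
  set b' := deriv F₂ z₀ with hb'_def
  have hra : (0:ℝ) < ‖a‖ := norm_pos_iff.mpr h10
  have hrb : (0:ℝ) < ‖b‖ := norm_pos_iff.mpr h20
  have hca : ((‖a‖ : ℝ) : ℂ) ≠ 0 := by exact_mod_cast hra.ne'
  have hcb : ((‖b‖ : ℝ) : ℂ) ≠ 0 := by exact_mod_cast hrb.ne'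
  set w₁ : ℂ := (starRingEnd ℂ) a * a' / (‖a‖ : ℂ) with hw₁
  set w₂ : ℂ := (starRingEnd ℂ) b * b' / (‖b‖ : ℂ) with hw₂
  have hf1 : fderiv ℝ (fun z => ‖F₁ z‖) z₀ = lmapAux w₁ :=
    (abs_hasFDerivAt F₁ z₀ h1 h10).fderiv
  have hf2 : fderiv ℝ (fun z => ‖F₂ z‖) z₀ = lmapAux w₂ :=
    (abs_hasFDerivAt F₂ z₀ h2 h20).fderiv
  -- key relations
  have ka : ((‖a‖ : ℝ) : ℂ) * ((‖a‖ : ℝ) : ℂ) = a * (starRingEnd ℂ) a := by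
    rw [Complex.mul_conj, ← Complex.sq_norm]
    push_cast
    ring
  have kb : ((‖b‖ : ℝ) : ℂ) * ((‖b‖ : ℝ) : ℂ) = b * (starRingEnd ℂ) b := by
    rw [Complex.mul_conj, ← Complex.sq_norm]
    push_cast
    ring
  -- LHS rewrite
  set t : ℂ := ((‖b‖ / ‖a‖ : ℝ) : ℂ) with ht
  have hconja : (starRingEnd ℂ) a = ((‖a‖ : ℝ) : ℂ) * ((‖a‖ : ℝ) : ℂ) / a := by
    rw [eq_div_iff h10]
    linear_combination -ka
  have hconjb : (starRingEnd ℂ) b = ((‖b‖ : ℝ) : ℂ) * ((‖b‖ : ℝ) : ℂ) / b := by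
    rw [eq_div_iff h20]
    linear_combination -kb
  have key : b' - b * a' / a = (b / (‖b‖ : ℂ)) * (w₂ - t * w₁) := by
    rw [hw₁, hw₂, ht, hconja, hconjb]
    push_cast
    field_simp [h10, h20, hca, hcb]
  have habsq : ‖b / (‖b‖ : ℂ)‖ = 1 := by
    rw [norm_div]
    simp [Complex.norm_real, abs_of_pos hrb]
    exact h20
  have hLHS : ‖b' - b * a' / a‖ = ‖w₂ - t * w₁‖ := by
    rw [key, norm_mul, habsq, one_mul]
  constructor
  · -- equality part
    have hd : deriv (fun z => F₂ z / F₁ z) z₀ = (b' * a - b * a') / a ^ 2 :=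
      deriv_div h2 h1 h10
    rw [hd, ← norm_mul]
    congr 1
    field_simp
  · -- inequality part
    rw [hf1, hf2, lmapAux_sub, norm_lmapAux, norm_lmapAux, hLHS]
    have tri : ‖w₂ - t * w₁‖ ≤
        ‖w₂ - w₁‖ + ‖w₁ - t * w₁‖ := by
      simpa using norm_sub_le_norm_sub_add_norm_sub w₂ w₁ (t * w₁)
    refine tri.trans ?_
    gcongr
    have : w₁ - t * w₁ = (1 - t) * w₁ := by ring
    rw [this, norm_mul]
    have ht1 : ‖1 - t‖ = |‖a‖ - ‖b‖| / ‖a‖ := by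
      rw [ht]
      have : (1 : ℂ) - ((‖b‖ / ‖a‖ : ℝ) : ℂ) =
          (((‖a‖ - ‖b‖) / ‖a‖ : ℝ) : ℂ) := by
        push_cast
        field_simp
      rw [this, Complex.norm_real, Real.norm_eq_abs, abs_div, abs_of_pos hra]
    rw [ht1]
    ring_nf
    rfl
end

section
/- Let Ω ⊆ ℂ be open, p ∈ [1, ∞), and let F₁, F₂ : Ω → ℂ be holomorphic on Ω with F₁(z) ≠ 0 for all z ∈ Ω and with F₂ not identically zero on any connected component of Ω. Suppose there exist λ₀ ∈ ℂ and C_P ≥ 0 (a Poincaré-type hypothesis) such that ‖F₂ − λ₀ F₁‖_{L^p(Ω)} ≤ C_P · ‖ F₂′ − F₂ F₁′/F₁ ‖_{L^p(Ω)}. Then there exists λ ∈ ℂ with |λ| = 1 such that ‖F₂ − λ F₁‖_{L^p(Ω)} ≤ 2 C_P · ( ‖ z ↦ ‖D|F₂|(z) − D|F₁|(z)‖ ‖_{L^p(Ω)} + ‖ z ↦ (‖D|F₁|(z)‖ / |F₁(z)|) · | |F₁(z)| − |F₂(z)| | ‖_{L^p(Ω)} ) + ‖ |F₁| − |F₂|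 ‖_{L^p(Ω)} (an inequality in [0, ∞]). -/
open Complex
noncomputable def Lmap (a : ℂ) : ℂ →L[ℝ] ℝ :=
  Complex.reCLM.comp (((ContinuousLinearMap.mul ℂ ℂ) a).restrictScalars ℝ)
lemma Lmap_apply (a v : ℂ) : Lmap a v = (a * v).re := rfl


lemma Lmap_sub (a b : ℂ) : Lmap a - Lmap b = Lmap (a - b) := by
  ext v; simp [Lmap_apply, sub_mul]

lemma abs_le_norm_Lmap (a : ℂ) : ‖a‖ ≤ ‖Lmap a‖ := by
  rcases eq_or_ne a 0 with rfl | ha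
  · simp
  · have h := (Lmap a).le_opNorm ((starRingEnd ℂ) a)
    rw [Lmap_apply, Complex.mul_conj] at h
    simp only [Complex.normSq_eq_norm_sq] at h
    have h2 : ‖a‖ * ‖a‖ ≤ ‖Lmap a‖ * ‖a‖ := by
      simpa [Real.norm_eq_abs, abs_of_nonneg, sq] using h
    have ha' : 0 < ‖a‖ := norm_pos_iff.mpr ha
    exact le_of_mul_le_mul_right h2 ha'

lemma hasFDerivAt_cabs {w : ℂ} (hw : w ≠ 0) :
    HasFDerivAt (fun z : ℂ => ‖z‖) (Lmap ((‖w‖)⁻¹ • (starRingEnd ℂ) w)) w := by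
  have hre : HasFDerivAt Complex.re Complex.reCLM w := Complex.reCLM.hasFDerivAt
  have him : HasFDerivAt Complex.im Complex.imCLM w := Complex.imCLM.hasFDerivAt
  have hns : HasFDerivAt Complex.normSq
      ((w.re • Complex.reCLM + w.re • Complex.reCLM) +
       (w.im • Complex.imCLM + w.im • Complex.imCLM)) w := by
    have := (hre.mul hre).add (him.mul him)
    have hf : (⇑Complex.normSq) = Complex.re * Complex.re + Complex.im * Complex.im := by
      funext z; exact Complex.normSq_apply z
    rw [hf]; exact this
  have hns0 : Complex.normSq w ≠ 0 := by simpa [Complex.normSq_eq_zero] using hw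
  have hsq := Real.hasDerivAt_sqrt hns0
  have hcomp := hsq.comp_hasFDerivAt w hns
  have habs : HasFDerivAt (fun z : ℂ => ‖z‖)
      ((1 / (2 * Real.sqrt (Complex.normSq w))) •
        ((w.re • Complex.reCLM + w.re • Complex.reCLM) +
         (w.im • Complex.imCLM + w.im • Complex.imCLM))) w := by
    have : (fun z => Real.sqrt (Complex.normSq z)) = fun z : ℂ => ‖z‖ := by
      funext z; rw [Complex.norm_def]
    rwa [Function.comp_def, this] at hcomp
  convert habs using 1
  ext v
  have h1 : Real.sqrt (Complex.normSq w) = ‖w‖ := by rw [Complex.norm_def]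
  have h2 : (0:ℝ) < ‖w‖ := norm_pos_iff.mpr hw
  simp only [Lmap_apply, ContinuousLinearMap.smul_apply, ContinuousLinearMap.add_apply,
    Complex.reCLM_apply, Complex.imCLM_apply, h1, smul_eq_mul]
  rw [Complex.real_smul]
  simp only [Complex.mul_re, Complex.ofReal_re, Complex.ofReal_im, Complex.conj_re,
    Complex.conj_im, Complex.mul_im]
  field_simp
  ring

lemma fderiv_cabs_comp {F : ℂ → ℂ} {z : ℂ} (hd : DifferentiableAt ℂ F z) (h : F z ≠ 0) :
    fderiv ℝ (fun w => ‖F w‖) z =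
      Lmap ((‖F z‖)⁻¹ • ((starRingEnd ℂ) (F z) * deriv F z)) := by
  have hF : HasFDerivAt F (fderiv ℂ F z) z := hd.hasFDerivAt
  have hcomp := (hasFDerivAt_cabs h).comp z (hF.restrictScalars ℝ)
  have hcomp' : HasFDerivAt (fun w => ‖F w‖) _ z := hcomp
  rw [hcomp'.fderiv]
  ext v
  have hv : fderiv ℂ F z v = v * deriv F z := by
    have : v = v • (1:ℂ) := by simp
    rw [deriv, this, map_smul]
    simp [smul_eq_mul, mul_comm]
  simp only [ContinuousLinearMap.coe_comp', Function.comp_apply,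
    ContinuousLinearMap.coe_restrictScalars', hv, Lmap_apply]
  rw [smul_mul_assoc, smul_mul_assoc, Complex.real_smul, Complex.real_smul]
  ring_nf

lemma key_pointwise {F₁ F₂ : ℂ → ℂ} {z : ℂ} (hd1 : DifferentiableAt ℂ F₁ z)
    (hd2 : DifferentiableAt ℂ F₂ z) (h1 : F₁ z ≠ 0) (h2 : F₂ z ≠ 0) :
    ‖deriv F₂ z - F₂ z * deriv F₁ z / F₁ z‖ ≤
      ‖fderiv ℝ (fun w => ‖F₂ w‖) z - fderiv ℝ (fun w => ‖F₁ w‖) z‖ +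
      (‖fderiv ℝ (fun w => ‖F₁ w‖) z‖ / ‖F₁ z‖) *
        |‖F₁ z‖ - ‖F₂ z‖| := by
  have p1 : (0:ℝ) < ‖F₁ z‖ := norm_pos_iff.mpr h1
  have p2 : (0:ℝ) < ‖F₂ z‖ := norm_pos_iff.mpr h2
  set a₁ : ℂ := (‖F₁ z‖)⁻¹ • ((starRingEnd ℂ) (F₁ z) * deriv F₁ z) with ha₁
  set a₂ : ℂ := (‖F₂ z‖)⁻¹ • ((starRingEnd ℂ) (F₂ z) * deriv F₂ z) with ha₂
  rw [fderiv_cabs_comp hd1 h1, fderiv_cabs_comp hd2 h2, Lmap_sub]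
  have e1 : (starRingEnd ℂ) (F₁ z) = ((‖F₁ z‖ : ℝ):ℂ)^2 / F₁ z := by
    rw [eq_div_iff h1, mul_comm]
    rw [Complex.mul_conj, Complex.normSq_eq_norm_sq]; push_cast; ring
  have e2 : (starRingEnd ℂ) (F₂ z) = ((‖F₂ z‖ : ℝ):ℂ)^2 / F₂ z := by
    rw [eq_div_iff h2, mul_comm]
    rw [Complex.mul_conj, Complex.normSq_eq_norm_sq]; push_cast; ring
  have hiden : ((starRingEnd ℂ) (F₂ z) / (‖F₂ z‖ : ℂ)) *
      (deriv F₂ z - F₂ z * deriv F₁ z / F₁ z) =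
      a₂ - (((‖F₂ z‖ / ‖F₁ z‖ : ℝ)):ℂ) * a₁ := by
    rw [ha₁, ha₂, Complex.real_smul, Complex.real_smul, e1, e2]
    have c1 : ((‖F₁ z‖ : ℝ):ℂ) ≠ 0 := by
      simpa using p1.ne'
    have c2 : ((‖F₂ z‖ : ℝ):ℂ) ≠ 0 := by
      simpa using p2.ne'
    push_cast
    field_simp
  have habs : ‖deriv F₂ z - F₂ z * deriv F₁ z / F₁ z‖ =
      ‖a₂ - (((‖F₂ z‖ / ‖F₁ z‖ : ℝ)):ℂ) * a₁‖ := by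
    rw [← hiden, norm_mul]
    have : ‖(starRingEnd ℂ) (F₂ z) / (‖F₂ z‖ : ℂ)‖ = 1 := by
      rw [norm_div, Complex.norm_conj, Complex.norm_real, norm_norm, div_self p2.ne']
    rw [this, one_mul]
  have habs_a₁ : ‖a₁‖ = ‖deriv F₁ z‖ := by
    rw [ha₁, Complex.real_smul, norm_mul, norm_mul, Complex.norm_real, Complex.norm_conj,
      Real.norm_of_nonneg (inv_pos.mpr p1).le]
    field_simp
  have tri : ‖a₂ - (((‖F₂ z‖ / ‖F₁ z‖ : ℝ)):ℂ) * a₁‖ ≤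
      ‖a₂ - a₁‖ +
        (‖deriv F₁ z‖ / ‖F₁ z‖) *
          |‖F₁ z‖ - ‖F₂ z‖| := by
    have : a₂ - (((‖F₂ z‖ / ‖F₁ z‖ : ℝ)):ℂ) * a₁ =
        (a₂ - a₁) + ((((1 : ℝ) - ‖F₂ z‖ / ‖F₁ z‖ : ℝ)):ℂ) * a₁ := by
      push_cast; ring
    rw [this]
    refine (norm_add_le _ _).trans ?_
    gcongr
    rw [norm_mul, Complex.norm_real, Real.norm_eq_abs, habs_a₁]
    have he : |(1:ℝ) - ‖F₂ z‖ / ‖F₁ z‖| =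
        |‖F₁ z‖ - ‖F₂ z‖| / ‖F₁ z‖ := by
      rw [show (1:ℝ) - ‖F₂ z‖/‖F₁ z‖ =
        (‖F₁ z‖ - ‖F₂ z‖)/‖F₁ z‖ by field_simp,
        abs_div, abs_of_pos p1]
    rw [he]
    exact le_of_eq (by ring)
  rw [habs]
  refine tri.trans (add_le_add ?_ ?_)
  · exact abs_le_norm_Lmap _
  · gcongr
    exact habs_a₁ ▸ abs_le_norm_Lmap a₁

lemma zero_set_countable {Ω : Set ℂ} (hΩ : IsOpen Ω) {F : ℂ → ℂ} (h : DifferentiableOn ℂ F Ω)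
    (hne : ∀ z ∈ Ω, ∃ w ∈ connectedComponentIn Ω z, F w ≠ 0) :
    Set.Countable {z | z ∈ Ω ∧ F z = 0} := by
  set S := {z | z ∈ Ω ∧ F z = 0} with hS
  have hiso : ∀ z ∈ S, ∀ᶠ w in nhdsWithin z {z}ᶜ, w ∉ S := by
    intro z hz
    have hzΩ : z ∈ Ω := hz.1
    have han : AnalyticAt ℂ F z := h.analyticAt (hΩ.mem_nhds hzΩ)
    rcases han.eventually_eq_zero_or_eventually_ne_zero with hev | hev
    · exfalso
      obtain ⟨w, hw, hwne⟩ := hne z hzΩ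
      have hcomp_pre : IsPreconnected (connectedComponentIn Ω z) :=
        (isConnected_connectedComponentIn_iff.mpr hzΩ).isPreconnected
      have han' : AnalyticOnNhd ℂ F (connectedComponentIn Ω z) := fun w hw =>
        h.analyticAt (hΩ.mem_nhds (connectedComponentIn_subset Ω z hw))
      have hfreq : ∃ᶠ w in nhdsWithin z {z}ᶜ, F w = 0 :=
        ((hev.filter_mono nhdsWithin_le_nhds).frequently)
      have := han'.eqOn_zero_of_preconnected_of_frequently_eq_zero hcomp_pre
        (mem_connectedComponentIn hzΩ) hfreq
      exact hwne (this hw)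
    · exact hev.mono fun w hw hwS => hw hwS.2
  have hd : DiscreteTopology S := by
    rw [discreteTopology_subtype_iff]
    intro x hx
    rw [Filter.inf_principal_eq_bot]
    exact hiso x hx
  have : Countable S := (TopologicalSpace.separableSpace_iff_countable).mp inferInstance
  exact Set.countable_coe_iff.mp this

open MeasureTheory ENNReal

/-- **Elementary stability estimate for holomorphic functions under a Poincaré hypothesis.**
Let `F₁, F₂` be holomorphic on an open `Ω ⊆ ℂ`, with `F₁` nonvanishing and `F₂` not
identically zero on any connected component of `Ω`. If the weighted Poincaré-type
inequality `‖F₂ − λ₀F₁‖_{L^p(Ω)} ≤ C_P ‖F₂′ − F₂F₁′/F₁‖_{L^p(Ω)}` holds, then some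
unimodular `λ` satisfies
`‖F₂ − λF₁‖_{L^p(Ω)} ≤ 2C_P(‖‖D|F₂|−D|F₁|‖‖_{L^p(Ω)} +
‖(‖D|F₁|‖/|F₁|)·||F₁|−|F₂||‖_{L^p(Ω)}) + ‖|F₁|−|F₂|‖_{L^p(Ω)}` (in `[0,∞]`).
Here `D|F_i|(z) = fderiv ℝ (|F_i|) z`, which is `0` wherever `|F_i|` is not
differentiable. -/
theorem stability_estimate_holomorphic_poincare
    (Ω : Set ℂ) (hΩ : IsOpen Ω) (p : ℝ≥0∞) (hp : 1 ≤ p) (hp' : p ≠ ∞)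
    (F₁ F₂ : ℂ → ℂ) (h1 : DifferentiableOn ℂ F₁ Ω) (h2 : DifferentiableOn ℂ F₂ Ω)
    (h1ne : ∀ z ∈ Ω, F₁ z ≠ 0)
    (h2ne : ∀ z ∈ Ω, ∃ w ∈ connectedComponentIn Ω z, F₂ w ≠ 0)
    (l₀ : ℂ) (CP : ℝ) (hCP : 0 ≤ CP)
    (hpoinc : eLpNorm (fun z => F₂ z - l₀ * F₁ z) p (volume.restrict Ω) ≤
      ENNReal.ofReal CP *
        eLpNorm (fun z => deriv F₂ z - F₂ z * deriv F₁ z / F₁ z) p (volume.restrict Ω)) :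
    ∃ l : ℂ, ‖l‖ = 1 ∧
      eLpNorm (fun z => F₂ z - l * F₁ z) p (volume.restrict Ω) ≤
        ENNReal.ofReal (2 * CP) *
          (eLpNorm (fun z => ‖fderiv ℝ (fun w => ‖F₂ w‖) z -
                fderiv ℝ (fun w => ‖F₁ w‖) z‖) p (volume.restrict Ω) +
            eLpNorm (fun z => (‖fderiv ℝ (fun w => ‖F₁ w‖) z‖ /
                  ‖F₁ z‖) *
                |‖F₁ z‖ - ‖F₂ z‖|) p (volume.restrict Ω)) +
          eLpNorm (fun z => ‖F₁ z‖ - ‖F₂ z‖) p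
            (volume.restrict Ω) := by
  classical
  set μ := volume.restrict Ω with hμ
  have hΩm : MeasurableSet Ω := hΩ.measurableSet
  have hm1 : AEStronglyMeasurable F₁ μ := h1.continuousOn.aestronglyMeasurable hΩm
  have hm2 : AEStronglyMeasurable F₂ μ := h2.continuousOn.aestronglyMeasurable hΩm
  -- the unimodular constant
  set l : ℂ := if l₀ = 0 then 1 else (‖l₀‖ : ℂ)⁻¹ * l₀ with hl
  have hldef : l₀ - l = ((‖l₀‖ - 1 : ℝ) : ℂ) * l := by
    by_cases h : l₀ = 0
    · simp [hl, h]
    · have hn : (‖l₀‖ : ℂ) ≠ 0 := by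
        simpa using norm_ne_zero_iff.mpr h
      rw [hl, if_neg h]
      have hc : (‖l₀‖ : ℂ) * (‖l₀‖ : ℂ)⁻¹ = 1 := mul_inv_cancel₀ hn
      push_cast
      linear_combination (-l₀) * hc
  have hlnorm : ‖l‖ = 1 := by
    by_cases h : l₀ = 0
    · simp [hl, h]
    · rw [hl, if_neg h, norm_mul, norm_inv, Complex.norm_real, norm_norm]
      exact inv_mul_cancel₀ (norm_ne_zero_iff.mpr h)
  refine ⟨l, hlnorm, ?_⟩
  -- abbreviations
  set A : ℂ → ℝ := fun z => ‖fderiv ℝ (fun w => ‖F₂ w‖) z -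
      fderiv ℝ (fun w => ‖F₁ w‖) z‖ with hA
  set B : ℂ → ℝ := fun z => (‖fderiv ℝ (fun w => ‖F₁ w‖) z‖ /
      ‖F₁ z‖) * |‖F₁ z‖ - ‖F₂ z‖| with hB
  -- pointwise bound for the new constant
  have hpt : ∀ z : ℂ, ‖F₂ z - l * F₁ z‖ ≤
      ‖(fun w => 2 * ‖F₂ w - l₀ * F₁ w‖) z +
        (fun w => |‖F₁ w‖ - ‖F₂ w‖|) z‖ := by
    intro z
    simp only []
    have e0 : F₂ z - l * F₁ z = (F₂ z - l₀ * F₁ z) + (l₀ - l) * F₁ z := by ring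
    have t1 : ‖F₂ z - l * F₁ z‖ ≤ ‖F₂ z - l₀ * F₁ z‖ + ‖l₀ - l‖ * ‖F₁ z‖ := by
      rw [e0]
      exact (norm_add_le _ _).trans (by rw [norm_mul])
    have t2 : ‖l₀ - l‖ * ‖F₁ z‖ = |‖l₀ * F₁ z‖ - ‖F₁ z‖| := by
      rw [hldef, norm_mul, Complex.norm_real, Real.norm_eq_abs, hlnorm, mul_one,
        norm_mul]
      rw [show ‖l₀‖ * ‖F₁ z‖ - ‖F₁ z‖ = (‖l₀‖ - 1) * ‖F₁ z‖ by ring, abs_mul,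
        _root_.abs_of_nonneg (norm_nonneg (F₁ z))]
    have t3 : |‖l₀ * F₁ z‖ - ‖F₁ z‖| ≤ ‖F₂ z - l₀ * F₁ z‖ +
        |‖F₁ z‖ - ‖F₂ z‖| := by
      have u1 : |‖l₀ * F₁ z‖ - ‖F₂ z‖| ≤ ‖F₂ z - l₀ * F₁ z‖ := by
        rw [abs_sub_comm]
        exact (abs_norm_sub_norm_le _ _).trans_eq (by rw [norm_sub_rev]) |>.trans_eq rfl
      calc |‖l₀ * F₁ z‖ - ‖F₁ z‖|
          ≤ |‖l₀ * F₁ z‖ - ‖F₂ z‖| + |‖F₂ z‖ - ‖F₁ z‖| := abs_sub_le _ _ _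
        _ ≤ ‖F₂ z - l₀ * F₁ z‖ + |‖F₁ z‖ - ‖F₂ z‖| := by
            refine add_le_add u1 (le_of_eq ?_)
            rw [abs_sub_comm]
    have nn : 0 ≤ 2 * ‖F₂ z - l₀ * F₁ z‖ + |‖F₁ z‖ - ‖F₂ z‖| := by
      positivity
    rw [Real.norm_of_nonneg nn]
    nlinarith [t1, t2.le, t3]
  -- a.e. pointwise bound for the derivative term
  have hS : Set.Countable {z | z ∈ Ω ∧ F₂ z = 0} := zero_set_countable hΩ h2 h2ne
  have hSnull : ∀ᵐ z ∂volume, z ∉ {z | z ∈ Ω ∧ F₂ z = 0} := by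
    have := hS.measure_zero (volume : Measure ℂ)
    exact (ae_iff).mpr (by simpa using this)
  have hptd : ∀ᵐ z ∂μ, ‖deriv F₂ z - F₂ z * deriv F₁ z / F₁ z‖ ≤ ‖A z + B z‖ := by
    have hmem : ∀ᵐ z ∂μ, z ∈ Ω := ae_restrict_mem hΩm
    have hS' : ∀ᵐ z ∂μ, z ∉ {z | z ∈ Ω ∧ F₂ z = 0} := ae_restrict_of_ae hSnull
    filter_upwards [hmem, hS'] with z hz hzS
    have hF2 : F₂ z ≠ 0 := fun h0 => hzS ⟨hz, h0⟩
    have hd1 : DifferentiableAt ℂ F₁ z := h1.differentiableAt (hΩ.mem_nhds hz)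
    have hd2 : DifferentiableAt ℂ F₂ z := h2.differentiableAt (hΩ.mem_nhds hz)
    have key := key_pointwise hd1 hd2 (h1ne z hz) hF2
    have hBnn : 0 ≤ B z := by
      rw [hB]
      positivity
    have hAnn : 0 ≤ A z := norm_nonneg _
    have hnn : ‖A z + B z‖ = A z + B z := Real.norm_of_nonneg (by linarith)
    rw [hnn]
    exact key
  -- measurability
  have hAm : AEStronglyMeasurable A μ := by
    exact (((measurable_fderiv ℝ _).sub (measurable_fderiv ℝ _)).norm).aestronglyMeasurable
  have habs1 : AEStronglyMeasurable (fun z => ‖F₁ z‖) μ :=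
    continuous_norm.comp_aestronglyMeasurable hm1
  have habs2 : AEStronglyMeasurable (fun z => ‖F₂ z‖) μ :=
    continuous_norm.comp_aestronglyMeasurable hm2
  have hBm : AEStronglyMeasurable B μ := by
    have q1 : AEMeasurable (fun z => ‖fderiv ℝ (fun w => ‖F₁ w‖) z‖ /
        ‖F₁ z‖) μ :=
      ((measurable_fderiv ℝ _).norm.aemeasurable).div habs1.aemeasurable
    have q2 : AEMeasurable (fun z => |‖F₁ z‖ - ‖F₂ z‖|) μ :=
      _root_.continuous_abs.measurable.comp_aemeasurable
        (habs1.aemeasurable.sub habs2.aemeasurable)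
    exact (q1.mul q2).aestronglyMeasurable
  have hgm : AEStronglyMeasurable (fun z => 2 * ‖F₂ z - l₀ * F₁ z‖) μ := by
    exact ((hm2.sub (hm1.const_smul l₀)).norm.const_mul 2)
  have hsubm : AEStronglyMeasurable (fun z => ‖F₁ z‖ - ‖F₂ z‖) μ :=
    habs1.sub habs2
  have hhm : AEStronglyMeasurable (fun z => |‖F₁ z‖ - ‖F₂ z‖|) μ :=
    _root_.continuous_abs.comp_aestronglyMeasurable hsubm
  -- chain of inequalities
  have step1 : eLpNorm (fun z => F₂ z - l * F₁ z) p μ ≤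
      eLpNorm ((fun z => 2 * ‖F₂ z - l₀ * F₁ z‖) +
        (fun z => |‖F₁ z‖ - ‖F₂ z‖|)) p μ :=
    eLpNorm_mono hpt
  have step2 : eLpNorm ((fun z => 2 * ‖F₂ z - l₀ * F₁ z‖) +
      (fun z => |‖F₁ z‖ - ‖F₂ z‖|)) p μ ≤
      eLpNorm (fun z => 2 * ‖F₂ z - l₀ * F₁ z‖) p μ +
      eLpNorm (fun z => |‖F₁ z‖ - ‖F₂ z‖|) p μ :=
    eLpNorm_add_le hgm hhm hp
  have step3 : eLpNorm (fun z => 2 * ‖F₂ z - l₀ * F₁ z‖) p μ =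
      2 * eLpNorm (fun z => F₂ z - l₀ * F₁ z) p μ := by
    have : (fun z => 2 * ‖F₂ z - l₀ * F₁ z‖) =
        (2:ℝ) • (fun z => ‖F₂ z - l₀ * F₁ z‖) := by
      funext z; simp
    rw [this, eLpNorm_const_smul, eLpNorm_norm]
    norm_num
    rw [Real.enorm_eq_ofReal (by norm_num)]
    norm_num
  have step4 : eLpNorm (fun z => |‖F₁ z‖ - ‖F₂ z‖|) p μ =
      eLpNorm (fun z => ‖F₁ z‖ - ‖F₂ z‖) p μ := by
    have : (fun z => |‖F₁ z‖ - ‖F₂ z‖|) =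
        fun z => ‖‖F₁ z‖ - ‖F₂ z‖‖ := by
      funext z; rw [Real.norm_eq_abs]
    rw [this, eLpNorm_norm]
  have stepd : eLpNorm (fun z => deriv F₂ z - F₂ z * deriv F₁ z / F₁ z) p μ ≤
      eLpNorm A p μ + eLpNorm B p μ :=
    (eLpNorm_mono_ae hptd).trans (eLpNorm_add_le hAm hBm hp)
  calc eLpNorm (fun z => F₂ z - l * F₁ z) p μ
      ≤ 2 * eLpNorm (fun z => F₂ z - l₀ * F₁ z) p μ +
        eLpNorm (fun z => ‖F₁ z‖ - ‖F₂ z‖) p μ := by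
        rw [← step3, ← step4]; exact step1.trans step2
    _ ≤ 2 * (ENNReal.ofReal CP * (eLpNorm A p μ + eLpNorm B p μ)) +
        eLpNorm (fun z => ‖F₁ z‖ - ‖F₂ z‖) p μ := by
        gcongr
        exact hpoinc.trans (by gcongr)
    _ = ENNReal.ofReal (2 * CP) * (eLpNorm A p μ + eLpNorm B p μ) +
        eLpNorm (fun z => ‖F₁ z‖ - ‖F₂ z‖) p μ := by
        rw [ENNReal.ofReal_mul (by norm_num : (0:ℝ) ≤ 2)]
        rw [← mul_assoc]
        congr 1
        congr 1
        simp [ENNReal.ofReal_ofNat]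
end

section
/- Let z₀ ∈ ℂ, ε > 0, p ∈ [1, ∞), and let H be holomorphic on the open ball B(z₀, ε) ⊆ ℂ. Then ∫_{B(z₀, ε/2)} |H(z)|^p dA(z) ≤ 4 · ∫_{B(z₀, ε) ∖ B(z₀, ε/2)} |H(z)|^p dA(z), where dA denotes two-dimensional Lebesgue measure (an inequality in [0, ∞]). -/
open MeasureTheory ENNReal
open Set Metric Real

theorem lintegral_comp_polarCoord_symm_aux (g : ℝ × ℝ → ENNReal) :
    (∫⁻ p in polarCoord.target, ENNReal.ofReal p.1 * g (polarCoord.symm p)) = ∫⁻ p, g p := by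
  set B : ℝ × ℝ → ℝ × ℝ →L[ℝ] ℝ × ℝ := fun p =>
    LinearMap.toContinuousLinearMap (Matrix.toLin (Module.Basis.finTwoProd ℝ) (Module.Basis.finTwoProd ℝ)
      !![cos p.2, -p.1 * sin p.2; sin p.2, p.1 * cos p.2])
  have A : ∀ p ∈ polarCoord.target, HasFDerivWithinAt polarCoord.symm (B p) polarCoord.target p :=
    fun p _ => (hasFDerivAt_polarCoord_symm p).hasFDerivWithinAt
  have B_det : ∀ p, (B p).det = p.1 := by
    intro p
    conv_rhs => rw [← one_mul p.1, ← cos_sq_add_sin_sq p.2]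
    simp only [B, neg_mul, LinearMap.det_toContinuousLinearMap, LinearMap.det_toLin,
      Matrix.det_fin_two_of, sub_neg_eq_add]
    ring
  symm
  calc
    ∫⁻ p, g p = ∫⁻ p in polarCoord.source, g p := by
      rw [← setLIntegral_univ]
      exact (setLIntegral_congr polarCoord_source_ae_eq_univ.symm)
    _ = ∫⁻ p in polarCoord.symm '' polarCoord.target, g p := by
      rw [polarCoord.symm_image_target_eq_source]
    _ = ∫⁻ p in polarCoord.target, ENNReal.ofReal |(B p).det| * g (polarCoord.symm p) := by
      exact lintegral_image_eq_lintegral_abs_det_fderiv_mul volume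
        polarCoord.open_target.measurableSet A (polarCoord.symm.injOn) g
    _ = ∫⁻ p in polarCoord.target, ENNReal.ofReal p.1 * g (polarCoord.symm p) := by
      refine setLIntegral_congr_fun polarCoord.open_target.measurableSet
        (fun x hx => ?_)
      rw [B_det, abs_of_pos hx.1]

theorem Complex.lintegral_comp_polarCoord_symm_aux (g : ℂ → ENNReal) :
    (∫⁻ p in polarCoord.target, ENNReal.ofReal p.1 * g (Complex.polarCoord.symm p)) = ∫⁻ z, g z := by
  rw [← (Complex.volume_preserving_equiv_real_prod.symm).lintegral_comp_emb
    Complex.measurableEquivRealProd.symm.measurableEmbedding, ← _root_.lintegral_comp_polarCoord_symm_aux]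
  rfl

theorem circle_submean
    (z₀ : ℂ) (ε : ℝ) (p : ℝ) (hp : 1 ≤ p)
    (H : ℂ → ℂ) (hH : DifferentiableOn ℂ H (Metric.ball z₀ ε))
    (z : ℂ) (s : ℝ) (hs : 0 < s) (hsub : Metric.closedBall z s ⊆ Metric.ball z₀ ε) :
    2 * π * ‖H z‖ ^ p ≤
      ∫ θ in (0:ℝ)..(2 * π), ‖H (circleMap z s θ)‖ ^ p := by
  have hHc : ContinuousOn H (Metric.ball z₀ ε) := hH.continuousOn
  -- Cauchy integral formula
  have key : (∮ w in C(z, s), (w - z)⁻¹ • H w) = (2 * π * Complex.I : ℂ) • H z :=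
    Complex.circleIntegral_sub_center_inv_smul_of_differentiable_on_off_countable hs
      Set.countable_empty (hHc.mono hsub)
      (fun w hw => (hH.differentiableAt
        (Metric.isOpen_ball.mem_nhds (hsub (Metric.ball_subset_closedBall hw.1)))))
  have hmem : ∀ θ : ℝ, circleMap z s θ ∈ Metric.ball z₀ ε := fun θ =>
    hsub (Metric.sphere_subset_closedBall (circleMap_mem_sphere z hs.le θ))
  have key2 : ∫ θ in (0:ℝ)..(2 * π), H (circleMap z s θ) = (2 * π : ℝ) * H z := by
    have : (∮ w in C(z, s), (w - z)⁻¹ • H w)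
        = ∫ θ in (0:ℝ)..(2 * π), Complex.I * H (circleMap z s θ) := by
      rw [circleIntegral]
      congr 1
      funext θ
      rw [deriv_circleMap, circleMap_sub_center, smul_eq_mul, smul_eq_mul]
      have hne : circleMap 0 s θ ≠ 0 := by
        simpa using circleMap_ne_center (c := (0:ℂ)) hs.ne' (θ := θ)
      field_simp
    rw [this, intervalIntegral.integral_const_mul] at key
    apply mul_left_cancel₀ Complex.I_ne_zero
    rw [key, smul_eq_mul]
    push_cast
    ring
  -- norm inequality
  have hF : Continuous fun θ : ℝ => ‖H (circleMap z s θ)‖ :=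
    (continuous_norm.comp_continuousOn hHc).comp_continuous
      (continuous_circleMap z s) hmem
  have hrpow : Continuous fun t : ℝ => t ^ p :=
    continuous_iff_continuousAt.2 fun x =>
      Real.continuousAt_rpow_const x p (Or.inr (by linarith))
  have habs : 2 * π * ‖H z‖ ≤
      ∫ θ in (0:ℝ)..(2 * π), ‖H (circleMap z s θ)‖ := by
    have h1 : ‖(2 * π : ℝ) * H z‖
        = ‖∫ θ in (0:ℝ)..(2 * π), H (circleMap z s θ)‖ := by rw [key2]
    have h2 := intervalIntegral.norm_integral_le_integral_norm
      (f := fun θ => H (circleMap z s θ)) (μ := volume) (a := 0) (b := 2 * π)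
      (by positivity)
    rw [← h1] at h2
    calc 2 * π * ‖H z‖ = ‖(2 * π : ℝ) * H z‖ := by
          rw [norm_mul, Complex.norm_real, Real.norm_eq_abs, abs_of_nonneg Real.two_pi_pos.le]
      _ ≤ _ := h2.trans_eq (by simp)
  -- Jensen's inequality
  set μ : Measure ℝ := volume.restrict (Set.Ioc 0 (2 * π)) with hμ
  haveI : IsFiniteMeasure μ := ⟨by
    rw [hμ, Measure.restrict_apply_univ, Real.volume_Ioc]
    exact ENNReal.ofReal_lt_top⟩
  haveI : NeZero μ := ⟨by
    rw [hμ]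
    intro h
    rw [Measure.restrict_eq_zero, Real.volume_Ioc] at h
    simp only [ENNReal.ofReal_eq_zero, sub_zero] at h
    linarith [Real.two_pi_pos]⟩
  set F : ℝ → ℝ := fun θ => ‖H (circleMap z s θ)‖ with hFdef
  have hμuniv : (μ Set.univ).toReal = 2 * π := by
    rw [hμ, Measure.restrict_apply_univ, Real.volume_Ioc, sub_zero,
      ENNReal.toReal_ofReal Real.two_pi_pos.le]
  have havg : ∀ G : ℝ → ℝ, (⨍ θ, G θ ∂μ) = (2 * π)⁻¹ * ∫ θ in (0:ℝ)..(2 * π), G θ := by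
    intro G
    rw [average_eq, measureReal_def, hμuniv, smul_eq_mul,
      intervalIntegral.integral_of_le Real.two_pi_pos.le, hμ]
  have jensen := ConvexOn.map_average_le (μ := μ) (f := F) (convexOn_rpow hp)
    hrpow.continuousOn isClosed_Ici
    (Filter.Eventually.of_forall fun θ => norm_nonneg _)
    (hF.integrableOn_Ioc) ((hrpow.comp hF).integrableOn_Ioc)
  rw [havg, havg] at jensen
  have hI1 : 0 ≤ ∫ θ in (0:ℝ)..(2 * π), F θ :=
    intervalIntegral.integral_nonneg Real.two_pi_pos.le
      (fun θ _ => norm_nonneg _)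
  have step : ‖H z‖ ^ p ≤ ((2 * π)⁻¹ * ∫ θ in (0:ℝ)..(2 * π), F θ) ^ p := by
    apply Real.rpow_le_rpow (norm_nonneg _) _ (by linarith)
    rw [le_inv_mul_iff₀ Real.two_pi_pos]
    linarith [habs]
  have := step.trans jensen
  calc 2 * π * ‖H z‖ ^ p
      ≤ 2 * π * ((2 * π)⁻¹ * ∫ θ in (0:ℝ)..(2 * π), F θ ^ p) := by
        apply mul_le_mul_of_nonneg_left this (by positivity)
    _ = ∫ θ in (0:ℝ)..(2 * π), F θ ^ p := by
        field_simp




theorem area_submean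
    (z₀ : ℂ) (ε : ℝ) (p : ℝ) (hp : 1 ≤ p)
    (H : ℂ → ℂ) (hH : DifferentiableOn ℂ H (Metric.ball z₀ ε))
    (fB : ℂ → ENNReal)
    (hfB : fB = (Metric.ball z₀ ε).indicator fun w => ENNReal.ofReal (‖H w‖ ^ p))
    (hfBm : Measurable fB)
    (z : ℂ) (R : ℝ) (hR : 0 < R) (hsub : Metric.ball z R ⊆ Metric.ball z₀ ε) :
    ENNReal.ofReal (π * R ^ 2) * ENNReal.ofReal (‖H z‖ ^ p) ≤
      ∫⁻ w in Metric.ball z R, fB w := by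
  -- translate to a ball centred at the origin
  have htrans : ∫⁻ w in Metric.ball z R, fB w = ∫⁻ u in Metric.ball (0:ℂ) R, fB (z + u) := by
    have hemb : MeasurableEmbedding (fun u : ℂ => z + u) :=
      (MeasurableEquiv.addLeft z).measurableEmbedding
    have hmp : MeasurePreserving (fun u : ℂ => z + u) volume volume :=
      measurePreserving_add_left volume z
    have hpre : (fun u : ℂ => z + u) ⁻¹' Metric.ball z R = Metric.ball (0:ℂ) R := by
      ext u
      simp [Metric.mem_ball, dist_eq_norm]
    rw [← hmp.setLIntegral_comp_preimage_emb hemb fB (Metric.ball z R), hpre]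
  rw [htrans]
  set g : ℂ → ENNReal := (Metric.ball (0:ℂ) R).indicator (fun u => fB (z + u)) with hg
  have hgm : Measurable g :=
    (hfBm.comp (measurable_const.add measurable_id)).indicator measurableSet_ball
  have h1 : ∫⁻ u in Metric.ball (0:ℂ) R, fB (z + u) = ∫⁻ u, g u := by
    rw [hg, lintegral_indicator measurableSet_ball]
  rw [h1, ← Complex.lintegral_comp_polarCoord_symm_aux g]
  -- restrict the polar integral to `(0,R) × (-π,π)`
  have hsubset : (Set.Ioo (0:ℝ) R ×ˢ Set.Ioo (-π) π) ⊆ polarCoord.target := by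
    rintro ⟨a, b⟩ ⟨ha, hb⟩
    exact ⟨ha.1, hb⟩
  have hmono := lintegral_mono_set (μ := volume)
    (f := fun q : ℝ × ℝ => ENNReal.ofReal q.1 * g (Complex.polarCoord.symm q)) hsubset
  refine le_trans ?_ hmono
  -- iterated integral
  have hprod : ∫⁻ q in (Set.Ioo (0:ℝ) R ×ˢ Set.Ioo (-π) π),
        ENNReal.ofReal q.1 * g (Complex.polarCoord.symm q)
      = ∫⁻ s in Set.Ioo (0:ℝ) R, ∫⁻ θ in Set.Ioo (-π) π,
        ENNReal.ofReal s * g (Complex.polarCoord.symm (s, θ)) := by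
    have hcont : Continuous fun q : ℝ × ℝ => (Complex.polarCoord.symm q : ℂ) := by
      simp only [Complex.polarCoord_symm_apply]
      fun_prop
    rw [Measure.volume_eq_prod, ← Measure.prod_restrict]
    exact lintegral_prod _ ((measurable_fst.ennreal_ofReal.mul
      (hgm.comp hcont.measurable)).aemeasurable)
  rw [hprod]
  have hrpow : Continuous fun t : ℝ => t ^ p :=
    continuous_iff_continuousAt.2 fun x =>
      Real.continuousAt_rpow_const x p (Or.inr (by linarith))
  have hC : (0:ℝ) ≤ 2 * π * ‖H z‖ ^ p := by positivity
  have hinner : ∀ s ∈ Set.Ioo (0:ℝ) R,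
      ENNReal.ofReal s * ENNReal.ofReal (2 * π * ‖H z‖ ^ p)
        ≤ ∫⁻ θ in Set.Ioo (-π) π, ENNReal.ofReal s * g (Complex.polarCoord.symm (s, θ)) := by
    intro s hs
    have hscb : Metric.closedBall z s ⊆ Metric.ball z₀ ε :=
      (Metric.closedBall_subset_ball hs.2).trans hsub
    have hcm : ∀ θ : ℝ, z + Complex.polarCoord.symm (s, θ) = circleMap z s θ := by
      intro θ
      simp only [Complex.polarCoord_symm_apply, circleMap, Complex.exp_mul_I,
        ← Complex.ofReal_cos, ← Complex.ofReal_sin]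
    have hgval : ∀ θ : ℝ, g (Complex.polarCoord.symm (s, θ))
        = ENNReal.ofReal (‖H (circleMap z s θ)‖ ^ p) := by
      intro θ
      have hm1 : Complex.polarCoord.symm (s, θ) ∈ Metric.ball (0:ℂ) R := by
        rw [mem_ball_zero_iff, Complex.norm_polarCoord_symm]
        simpa [abs_of_pos hs.1] using hs.2
      have hm2 : circleMap z s θ ∈ Metric.ball z₀ ε :=
        hscb (Metric.sphere_subset_closedBall (circleMap_mem_sphere z hs.1.le θ))
      rw [hg, Set.indicator_of_mem hm1, hcm θ, hfB, Set.indicator_of_mem hm2]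
    have hFpc : Continuous fun θ : ℝ => ‖H (circleMap z s θ)‖ ^ p := by
      apply hrpow.comp
      exact (continuous_norm.comp_continuousOn hH.continuousOn).comp_continuous
        (continuous_circleMap z s)
        (fun θ => hscb (Metric.sphere_subset_closedBall (circleMap_mem_sphere z hs.1.le θ)))
    have hint : IntegrableOn (fun θ : ℝ => ‖H (circleMap z s θ)‖ ^ p)
        (Set.Ioo (-π) π) := hFpc.integrableOn_Ioc.mono_set Set.Ioo_subset_Ioc_self
    calc ENNReal.ofReal s * ENNReal.ofReal (2 * π * ‖H z‖ ^ p)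
        ≤ ENNReal.ofReal s *
          ENNReal.ofReal (∫ θ in Set.Ioo (-π) π, ‖H (circleMap z s θ)‖ ^ p) := by
          apply mul_le_mul_right
          apply ENNReal.ofReal_le_ofReal
          have hper : Function.Periodic
              (fun θ : ℝ => ‖H (circleMap z s θ)‖ ^ p) (2 * π) :=
            (periodic_circleMap z s).comp fun w => ‖H w‖ ^ p
          have heq : ∫ θ in Set.Ioo (-π) π, ‖H (circleMap z s θ)‖ ^ p
              = ∫ θ in (0:ℝ)..(2 * π), ‖H (circleMap z s θ)‖ ^ p := by
            rw [← integral_Ioc_eq_integral_Ioo,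
              ← intervalIntegral.integral_of_le (by linarith [Real.pi_pos] : -π ≤ π)]
            have h2 := hper.intervalIntegral_add_eq (-π) 0
            rw [zero_add] at h2
            rw [show -π + 2 * π = π by ring] at h2
            exact h2
          rw [heq]
          exact circle_submean z₀ ε p hp H hH z s hs.1 hscb
      _ = ∫⁻ θ in Set.Ioo (-π) π, ENNReal.ofReal s * g (Complex.polarCoord.symm (s, θ)) := by
          simp_rw [hgval]
          rw [lintegral_const_mul' _ _ ENNReal.ofReal_ne_top]
          congr 1
          rw [ofReal_integral_eq_lintegral_ofReal hint]
          filter_upwards with θ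
          positivity
  have houter : ∫⁻ s in Set.Ioo (0:ℝ) R,
        ENNReal.ofReal s * ENNReal.ofReal (2 * π * ‖H z‖ ^ p)
      = ENNReal.ofReal (R ^ 2 / 2) * ENNReal.ofReal (2 * π * ‖H z‖ ^ p) := by
    rw [lintegral_mul_const' _ _ ENNReal.ofReal_ne_top]
    congr 1
    have hid : IntegrableOn (fun s : ℝ => s) (Set.Ioo (0:ℝ) R) :=
      continuous_id.integrableOn_Ioc.mono_set Set.Ioo_subset_Ioc_self
    rw [← ofReal_integral_eq_lintegral_ofReal hid]
    · congr 1
      rw [← integral_Ioc_eq_integral_Ioo,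
        ← intervalIntegral.integral_of_le hR.le, integral_id]
      ring
    · filter_upwards [ae_restrict_mem measurableSet_Ioo] with x hx
      exact hx.1.le
  calc ENNReal.ofReal (π * R ^ 2) * ENNReal.ofReal (‖H z‖ ^ p)
      = ENNReal.ofReal (R ^ 2 / 2) * ENNReal.ofReal (2 * π * ‖H z‖ ^ p) := by
        rw [← ENNReal.ofReal_mul (by positivity), ← ENNReal.ofReal_mul (by positivity)]
        congr 1
        ring
    _ = ∫⁻ s in Set.Ioo (0:ℝ) R,
        ENNReal.ofReal s * ENNReal.ofReal (2 * π * ‖H z‖ ^ p) := houter.symm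
    _ ≤ _ := by
        apply setLIntegral_mono ?_ hinner
        have hcont : Continuous fun q : ℝ × ℝ => (Complex.polarCoord.symm q : ℂ) := by
          simp only [Complex.polarCoord_symm_apply]
          fun_prop
        exact Measurable.lintegral_prod_right
          (f := fun s θ => ENNReal.ofReal s * g (Complex.polarCoord.symm (s, θ)))
          (by exact
            (measurable_fst.ennreal_ofReal.mul (hgm.comp hcont.measurable)))

/-- **Caccioppoli-type estimate for holomorphic functions.**
If `H` is holomorphic on the disk `B(z₀, ε)`, then the `L^p` mass of `H` on the half
disk `B(z₀, ε/2)` is at most four times its `L^p` mass on the annulus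
`B(z₀, ε) ∖ B(z₀, ε/2)` (an inequality in `[0,∞]`). -/

theorem caccioppoli_holomorphic_disk
    (z₀ : ℂ) (ε : ℝ) (hε : 0 < ε) (p : ℝ) (hp : 1 ≤ p)
    (H : ℂ → ℂ) (hH : DifferentiableOn ℂ H (Metric.ball z₀ ε)) :
    (∫⁻ z in Metric.ball z₀ (ε / 2), ENNReal.ofReal (‖H z‖ ^ p)) ≤
      4 * ∫⁻ z in Metric.ball z₀ ε \ Metric.ball z₀ (ε / 2),
        ENNReal.ofReal (‖H z‖ ^ p) := by
  classical
  set f : ℂ → ENNReal := fun w => ENNReal.ofReal (‖H w‖ ^ p) with hf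
  set fB : ℂ → ENNReal := (Metric.ball z₀ ε).indicator f with hfB
  have hfc : ContinuousOn f (Metric.ball z₀ ε) :=
    ENNReal.continuous_ofReal.comp_continuousOn
      ((continuous_norm.comp_continuousOn hH.continuousOn).rpow_const
        fun x _ => Or.inr (by linarith))
  have hfBm : Measurable fB := by
    rw [hfB, ← Set.piecewise_eq_indicator]
    exact hfc.measurable_piecewise continuousOn_const measurableSet_ball
  set T : ENNReal := ∫⁻ w, fB w with hT
  -- each set-lintegral of `f` over a subset of the big ball equals that of `fB`
  have hcongr : ∀ s : Set ℂ, s ⊆ Metric.ball z₀ ε → MeasurableSet s →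
      ∫⁻ w in s, f w = ∫⁻ w in s, fB w := by
    intro s hs hms
    refine setLIntegral_congr_fun hms (fun w hw => ?_)
    rw [hfB, Set.indicator_of_mem (hs hw)]
  -- the key annulus estimate
  have key : ∀ a b R : ℝ, 0 < R → b + R ≤ ε →
      ENNReal.ofReal (π * R ^ 2) *
        ∫⁻ w in Metric.ball z₀ b \ Metric.ball z₀ a, fB w ≤
      T * volume (Metric.ball z₀ b \ Metric.ball z₀ a) := by
    intro a b R hR hbR
    set A : Set ℂ := Metric.ball z₀ b \ Metric.ball z₀ a with hA
    have hAm : MeasurableSet A := measurableSet_ball.diff measurableSet_ball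
    have hAsub : ∀ z ∈ A, Metric.ball z R ⊆ Metric.ball z₀ ε := by
      intro z hz w hw
      have h1 : dist z z₀ < b := hz.1
      have h2 : dist w z < R := hw
      have := dist_triangle w z z₀
      simp only [Metric.mem_ball]
      linarith
    -- the product kernel
    set U : Set (ℂ × ℂ) := {q : ℂ × ℂ | dist q.2 q.1 < R} with hU
    have hUopen : IsOpen U := by
      have : Continuous fun q : ℂ × ℂ => dist q.2 q.1 := by fun_prop
      simpa [hU] using isOpen_lt this continuous_const
    set F : ℂ → ℂ → ENNReal := fun z w => U.indicator (fun q => fB q.2) (z, w) with hFdef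
    have hFm : Measurable fun q : ℂ × ℂ => F q.1 q.2 := by
      have : Measurable (U.indicator (fun q : ℂ × ℂ => fB q.2)) :=
        (hfBm.comp measurable_snd).indicator hUopen.measurableSet
      simpa [hFdef] using this
    have hball : ∀ z : ℂ, ∫⁻ w in Metric.ball z R, fB w = ∫⁻ w, F z w := by
      intro z
      rw [← lintegral_indicator measurableSet_ball]
      refine lintegral_congr fun w => ?_
      show (Metric.ball z R).indicator fB w = U.indicator (fun q => fB q.2) (z, w)
      by_cases hw : w ∈ Metric.ball z R
      · rw [Set.indicator_of_mem hw, Set.indicator_of_mem (by simpa [hU] using hw)]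
      · rw [Set.indicator_of_notMem hw, Set.indicator_of_notMem (by simpa [hU] using hw)]
    calc ENNReal.ofReal (π * R ^ 2) * ∫⁻ w in A, fB w
        = ∫⁻ z in A, ENNReal.ofReal (π * R ^ 2) * fB z := by
          rw [lintegral_const_mul' _ _ ENNReal.ofReal_ne_top]
      _ ≤ ∫⁻ z in A, ∫⁻ w, F z w := by
          refine setLIntegral_mono ?_ ?_
          · exact Measurable.lintegral_prod_right (f := F)
              (by exact hFm)
          · intro z hz
            rw [← hball z]
            have hzball : z ∈ Metric.ball z₀ ε := by
              have h1 : dist z z₀ < b := hz.1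
              simp only [Metric.mem_ball]
              linarith
            have : fB z = f z := by rw [hfB, Set.indicator_of_mem hzball]
            rw [this, hf]
            exact area_submean z₀ ε p hp H hH fB hfB hfBm z R hR (hAsub z hz)
      _ = ∫⁻ w, ∫⁻ z in A, F z w := by
          exact lintegral_lintegral_swap
            (f := F) (by exact hFm.aemeasurable)
      _ ≤ ∫⁻ w, fB w * volume A := by
          refine lintegral_mono fun w => ?_
          calc ∫⁻ z in A, F z w ≤ ∫⁻ _ in A, fB w := by
                refine setLIntegral_mono' hAm fun z _ => ?_
                rw [hFdef]
                exact Set.indicator_le_self' (fun _ _ => zero_le) (z, w)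
            _ = fB w * volume A := setLIntegral_const A (fB w)
      _ = T * volume A := by
          rw [lintegral_mul_const' _ _ (by
            have : volume A ≤ volume (Metric.ball z₀ b) := measure_mono diff_subset
            exact (lt_of_le_of_lt this (by
              rw [Complex.volume_ball]; exact ENNReal.mul_lt_top (ENNReal.pow_lt_top
                ENNReal.ofReal_lt_top) ENNReal.coe_lt_top)).ne)]
  -- volume of balls
  have hvball : ∀ r : ℝ, 0 ≤ r → volume (Metric.ball z₀ r) = ENNReal.ofReal (π * r ^ 2) := by
    intro r hr
    have hpi : (NNReal.pi : ENNReal) = ENNReal.ofReal π := by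
      rw [← ENNReal.ofReal_coe_nnreal, NNReal.coe_real_pi]
    rw [Complex.volume_ball, ← ENNReal.ofReal_pow hr, hpi,
      ← ENNReal.ofReal_mul (by positivity)]
    congr 1
    ring
  -- annulus estimates with explicit constants
  have hIk : ∀ a b R c : ℝ, 0 ≤ a → a ≤ b → 0 < R → b + R ≤ ε →
      π * b ^ 2 - π * a ^ 2 ≤ π * R ^ 2 * c →
      ∫⁻ w in Metric.ball z₀ b \ Metric.ball z₀ a, fB w ≤ ENNReal.ofReal c * T := by
    intro a b R c ha hab hR hbR hc
    have hvolA : volume (Metric.ball z₀ b \ Metric.ball z₀ a)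
        = ENNReal.ofReal (π * b ^ 2 - π * a ^ 2) := by
      rw [measure_diff (Metric.ball_subset_ball hab) measurableSet_ball.nullMeasurableSet
          (by rw [hvball a ha]; exact ENNReal.ofReal_ne_top),
        hvball a ha, hvball b (ha.trans hab), ENNReal.ofReal_sub _ (by positivity)]
    have h := key a b R hR hbR
    rw [hvolA] at h
    have h2 : T * ENNReal.ofReal (π * b ^ 2 - π * a ^ 2)
        ≤ ENNReal.ofReal (π * R ^ 2) * (ENNReal.ofReal c * T) := by
      calc T * ENNReal.ofReal (π * b ^ 2 - π * a ^ 2)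
          ≤ T * ENNReal.ofReal (π * R ^ 2 * c) :=
            mul_le_mul_right (ENNReal.ofReal_le_ofReal hc) T
        _ = ENNReal.ofReal (π * R ^ 2) * (ENNReal.ofReal c * T) := by
            rw [ENNReal.ofReal_mul (by positivity)]
            ring
    exact (ENNReal.mul_le_mul_iff_right
      (ENNReal.ofReal_pos.mpr (by positivity)).ne' ENNReal.ofReal_ne_top).mp (h.trans h2)
  -- telescoping decomposition
  have hsplit : ∀ r1 r2 : ℝ, r1 ≤ r2 →
      ∫⁻ w in Metric.ball z₀ r2, fB w
        = (∫⁻ w in Metric.ball z₀ r1, fB w)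
          + ∫⁻ w in Metric.ball z₀ r2 \ Metric.ball z₀ r1, fB w := by
    intro r1 r2 h12
    rw [← lintegral_union (measurableSet_ball.diff measurableSet_ball)
      Set.disjoint_sdiff_right, Set.union_diff_cancel (Metric.ball_subset_ball h12)]
  set Inner : ENNReal := ∫⁻ w in Metric.ball z₀ (ε / 2), fB w with hInner
  set Ann : ENNReal := ∫⁻ w in Metric.ball z₀ ε \ Metric.ball z₀ (ε / 2), fB w with hAnn
  have hTsplit : T = Inner + Ann := by
    rw [hT, hfB, lintegral_indicator measurableSet_ball, hcongr _ (subset_refl _)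
      measurableSet_ball, hsplit (ε/2) ε (by linarith)]
  -- the four annuli
  have hI0 : ∫⁻ w in Metric.ball z₀ (ε/8) \ Metric.ball z₀ 0, fB w
      ≤ ENNReal.ofReal (1/49) * T :=
    hIk 0 (ε/8) (7*ε/8) (1/49) le_rfl (by linarith) (by linarith) (by linarith)
      (le_of_eq (by ring))
  have hI1 : ∫⁻ w in Metric.ball z₀ (2*ε/8) \ Metric.ball z₀ (ε/8), fB w
      ≤ ENNReal.ofReal (1/12) * T :=
    hIk (ε/8) (2*ε/8) (6*ε/8) (1/12) (by linarith) (by linarith) (by linarith) (by linarith)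
      (le_of_eq (by ring))
  have hI2 : ∫⁻ w in Metric.ball z₀ (3*ε/8) \ Metric.ball z₀ (2*ε/8), fB w
      ≤ ENNReal.ofReal (1/5) * T :=
    hIk (2*ε/8) (3*ε/8) (5*ε/8) (1/5) (by linarith) (by linarith) (by linarith) (by linarith)
      (le_of_eq (by ring))
  have hI3 : ∫⁻ w in Metric.ball z₀ (ε/2) \ Metric.ball z₀ (3*ε/8), fB w
      ≤ ENNReal.ofReal (7/16) * T :=
    hIk (3*ε/8) (ε/2) (4*ε/8) (7/16) (by linarith) (by linarith) (by linarith) (by linarith)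
      (le_of_eq (by ring))
  have hInnerT : Inner ≤ ENNReal.ofReal (1/49 + 1/12 + 1/5 + 7/16) * T := by
    have hd : ∫⁻ w in Metric.ball z₀ (ε/8), fB w
        = ∫⁻ w in Metric.ball z₀ (ε/8) \ Metric.ball z₀ 0, fB w := by
      rw [Metric.ball_zero, Set.diff_empty]
    calc Inner = (∫⁻ w in Metric.ball z₀ (3*ε/8), fB w)
          + ∫⁻ w in Metric.ball z₀ (ε/2) \ Metric.ball z₀ (3*ε/8), fB w :=
          hsplit (3*ε/8) (ε/2) (by linarith)
      _ = ((∫⁻ w in Metric.ball z₀ (2*ε/8), fB w)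
          + ∫⁻ w in Metric.ball z₀ (3*ε/8) \ Metric.ball z₀ (2*ε/8), fB w)
          + ∫⁻ w in Metric.ball z₀ (ε/2) \ Metric.ball z₀ (3*ε/8), fB w := by
          rw [← hsplit (2*ε/8) (3*ε/8) (by linarith)]
      _ = (((∫⁻ w in Metric.ball z₀ (ε/8) \ Metric.ball z₀ 0, fB w)
          + ∫⁻ w in Metric.ball z₀ (2*ε/8) \ Metric.ball z₀ (ε/8), fB w)
          + ∫⁻ w in Metric.ball z₀ (3*ε/8) \ Metric.ball z₀ (2*ε/8), fB w)
          + ∫⁻ w in Metric.ball z₀ (ε/2) \ Metric.ball z₀ (3*ε/8), fB w := by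
          rw [← hd, ← hsplit (ε/8) (2*ε/8) (by linarith)]
      _ ≤ (((ENNReal.ofReal (1/49) * T) + ENNReal.ofReal (1/12) * T)
          + ENNReal.ofReal (1/5) * T) + ENNReal.ofReal (7/16) * T := by
          gcongr
      _ = (ENNReal.ofReal (1/49) + ENNReal.ofReal (1/12) + ENNReal.ofReal (1/5)
          + ENNReal.ofReal (7/16)) * T := by ring
      _ = ENNReal.ofReal (1/49 + 1/12 + 1/5 + 7/16) * T := by
          rw [← ENNReal.ofReal_add (by norm_num) (by norm_num),
            ← ENNReal.ofReal_add (by norm_num) (by norm_num),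
            ← ENNReal.ofReal_add (by norm_num) (by norm_num)]
  -- Inner is finite
  have hInnerfin : Inner ≠ ⊤ := by
    have hcb : Metric.closedBall z₀ (ε/2) ⊆ Metric.ball z₀ ε :=
      Metric.closedBall_subset_ball (by linarith)
    have hcont : ContinuousOn (fun w => ‖H w‖ ^ p) (Metric.closedBall z₀ (ε/2)) :=
      ((continuous_norm.comp_continuousOn hH.continuousOn).rpow_const
        fun x _ => Or.inr (by linarith)).mono hcb
    obtain ⟨M, hM⟩ := (isCompact_closedBall z₀ (ε/2)).exists_bound_of_continuousOn hcont
    have hle : Inner ≤ ENNReal.ofReal M * volume (Metric.ball z₀ (ε/2)) := by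
      rw [hInner, ← setLIntegral_const]
      refine setLIntegral_mono' measurableSet_ball fun w hw => ?_
      rw [hfB, Set.indicator_of_mem (Metric.ball_subset_ball (by linarith) hw)]
      exact ENNReal.ofReal_le_ofReal
        ((le_abs_self _).trans (hM w (Metric.ball_subset_closedBall hw)))
    refine (lt_of_le_of_lt hle ?_).ne
    rw [hvball _ (by linarith)]
    exact ENNReal.mul_lt_top ENNReal.ofReal_lt_top ENNReal.ofReal_lt_top
  -- final arithmetic
  have hfive : 5 * Inner ≤ 4 * Inner + 4 * Ann := by
    calc 5 * Inner ≤ 5 * (ENNReal.ofReal (1/49 + 1/12 + 1/5 + 7/16) * (Inner + Ann)) := by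
          rw [← hTsplit]
          exact mul_le_mul_right hInnerT 5
      _ = (5 * ENNReal.ofReal (1/49 + 1/12 + 1/5 + 7/16)) * (Inner + Ann) := by ring
      _ ≤ 4 * (Inner + Ann) := by
          refine mul_le_mul_left ?_ _
          rw [show (5 : ENNReal) = ENNReal.ofReal (5:ℝ) by simp,
            show (4 : ENNReal) = ENNReal.ofReal (4:ℝ) by simp,
            ← ENNReal.ofReal_mul (by norm_num)]
          exact ENNReal.ofReal_le_ofReal (by norm_num)
      _ = 4 * Inner + 4 * Ann := by ring
  have hmain : Inner ≤ 4 * Ann := by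
    have h5 : (5:ENNReal) * Inner = 4 * Inner + Inner := by ring
    rw [h5] at hfive
    exact (ENNReal.add_le_add_iff_left
      (ENNReal.mul_ne_top (by norm_num) hInnerfin)).mp hfive
  -- translate back to `f`
  calc ∫⁻ z in Metric.ball z₀ (ε / 2), ENNReal.ofReal (‖H z‖ ^ p)
      = Inner := hcongr _ (Metric.ball_subset_ball (by linarith)) measurableSet_ball
    _ ≤ 4 * Ann := hmain
    _ = 4 * ∫⁻ z in Metric.ball z₀ ε \ Metric.ball z₀ (ε / 2),
        ENNReal.ofReal (‖H z‖ ^ p) := by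
        rw [hAnn, hcongr _ Set.diff_subset (measurableSet_ball.diff measurableSet_ball)]
end
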